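/- arXiv:2105.13141 — 2 statements merged into one kernel-verified Lean document; each statement's English description precedes it below -/
import Mathlib

section
/- Let n ≥ 5 be an integer and α,β,γ ∈ ℂ, and let d be a derivation of the Leibniz algebra 𝓛(α,β,γ). Then there exist complex numbers a_1,…,a_n and b_2,…,b_n such that d(e_1) = Σ_{t=1}^{n} a_t e_t, d(e_2) = (2a_1 + α a_{n−1})e_2 + Σ_{t=3}^{n−2} a_{t−1} e_t + (a_{n−1} + β a_{n−1})e_n, d(e_i) = (i a_1 + α a_{n−1})e_i + Σ_{t=i+1}^{n−2} a_{t−i+1} e_t for 3 ≤ i ≤ n−2, d(e_{n−1}) = Σ_{t=2}^{n} b_t e_t, and d(e_n) = (b_{n−3} − α a_{n−3})e_{n−2} + (b_{n−1} + a_1 + γ a_{n−1} − α(1+β)a_{n−1})e_n, where moreover b_i = α a_i for 2 ≤ i ≤ n−4, β(b_{n−3} − α a_{n−3}) = 0, γ(b_{n−3} − α a_{n−3}) = 0, α b_{n−1} = α a_1 + α² a_{n−1}, γ b_{n−1} = γ(a_1 + γ a_{n−1} − α(1+β)a_{n−1}), and γ a_{n−1} = β a_{n−1}(γ − α(1+β)).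 -/
open scoped BigOperators

noncomputable section

/-- `stdE n i` : the `i`-th standard basis vector of `Fin n → ℂ` (1-based indexing);
zero when `i` is out of range. -/
def stdE (n : ℕ) (i : ℕ) : Fin n → ℂ := fun j => if (j : ℕ) + 1 = i then 1 else 0

/-- The bilinear bracket on `Fin n → ℂ` determined by structure constants `c`
(1-based indices). -/
def scBr (n : ℕ) (c : ℕ → ℕ → Fin n → ℂ) (x y : Fin n → ℂ) : Fin n → ℂ :=
  ∑ i : Fin n, ∑ j : Fin n, (x i * y j) • c ((i : ℕ) + 1) ((j : ℕ) + 1)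

/-- Structure constants of the Leibniz algebra `𝓛(α,β,γ)`: the only nonzero products of
basis vectors are `[e_i,e_1]=e_{i+1}` for `1 ≤ i ≤ n-3`, `[e_{n-1},e_1]=e_n+α e_2`,
`[e_1,e_{n-1}]=β e_n`, `[e_{n-1},e_{n-1}]=γ e_n`. -/
def Lc (n : ℕ) (α β γ : ℂ) (i j : ℕ) : Fin n → ℂ :=
  (if 1 ≤ i ∧ i ≤ n - 3 ∧ j = 1 then stdE n (i + 1) else 0)
  + (if i = n - 1 ∧ j = 1 then stdE n n + α • stdE n 2 else 0)
  + (if i = 1 ∧ j = n - 1 then β • stdE n n else 0)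
  + (if i = n - 1 ∧ j = n - 1 then γ • stdE n n else 0)

/-- `d` is a derivation of the bracket determined by the structure constants `c`. -/
def IsDer (n : ℕ) (c : ℕ → ℕ → Fin n → ℂ) (d : (Fin n → ℂ) →ₗ[ℂ] (Fin n → ℂ)) : Prop :=
  ∀ x y : Fin n → ℂ, d (scBr n c x y) = scBr n c (d x) y + scBr n c x (d y)

lemma sum2_eq (n : ℕ) (f : Fin n → Fin n → ℂ) (i0 j0 : Fin n)
    (h : ∀ i j, i ≠ i0 ∨ j ≠ j0 → f i j = 0) :
    ∑ i : Fin n, ∑ j : Fin n, f i j = f i0 j0 := by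
  rw [Finset.sum_eq_single i0 (fun i _ hi => Finset.sum_eq_zero (fun j _ => h i j (Or.inl hi)))
    (fun h' => absurd (Finset.mem_univ _) h')]
  exact Finset.sum_eq_single j0 (fun j _ hj => h i0 j (Or.inr hj))
    (fun h' => absurd (Finset.mem_univ _) h')

set_option maxHeartbeats 1000000 in
lemma scBr_Lc_apply (n : ℕ) (hn : 5 ≤ n) (α β γ : ℂ) (x y : Fin n → ℂ) (k : Fin n) :
    scBr n (Lc n α β γ) x y k =
      (if 2 ≤ (k:ℕ)+1 ∧ (k:ℕ)+1 ≤ n-2 then x ⟨(k:ℕ)-1, by omega⟩ * y ⟨0, by omega⟩ else 0)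
      + (if (k:ℕ)+1 = 2 then α * (x ⟨n-2, by omega⟩ * y ⟨0, by omega⟩) else 0)
      + (if (k:ℕ)+1 = n then x ⟨n-2, by omega⟩ * y ⟨0, by omega⟩
            + β * (x ⟨0, by omega⟩ * y ⟨n-2, by omega⟩)
            + γ * (x ⟨n-2, by omega⟩ * y ⟨n-2, by omega⟩) else 0) := by
  have hk := k.isLt
  have S1 : (∑ i : Fin n, ∑ j : Fin n, x i * y j *
      if 1 ≤ (i:ℕ) + 1 ∧ (i:ℕ) + 1 ≤ n - 3 ∧ (j:ℕ) + 1 = 1 then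
        (if (k:ℕ) + 1 = (i:ℕ) + 1 + 1 then (1:ℂ) else 0) else 0)
      = (if 2 ≤ (k:ℕ)+1 ∧ (k:ℕ)+1 ≤ n-2 then x ⟨(k:ℕ)-1, by omega⟩ * y ⟨0, by omega⟩ else 0) := by
    rw [sum2_eq n _ ⟨(k:ℕ)-1, by omega⟩ ⟨0, by omega⟩]
    · simp only [Fin.val_mk, and_true, true_and]
      split_ifs <;> first | ring1 | (exfalso; omega)
    · intro i j hij
      have hij' : (i:ℕ) ≠ (k:ℕ)-1 ∨ (j:ℕ) ≠ 0 := by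
        rcases hij with h|h
        exacts [Or.inl (by simpa [Fin.ext_iff] using h), Or.inr (by simpa [Fin.ext_iff] using h)]
      split_ifs <;> first | ring1 | (exfalso; omega)
  have S2 : (∑ i : Fin n, ∑ j : Fin n, x i * y j *
      if (i:ℕ) + 1 = n - 1 ∧ (j:ℕ) + 1 = 1 then
        (if (k:ℕ) + 1 = n then (1:ℂ) else 0) + α * (if (k:ℕ) + 1 = 2 then 1 else 0) else 0)
      = (if (k:ℕ)+1 = 2 then α * (x ⟨n-2, by omega⟩ * y ⟨0, by omega⟩) else 0)
        + (if (k:ℕ)+1 = n then x ⟨n-2, by omega⟩ * y ⟨0, by omega⟩ else 0) := by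
    rw [sum2_eq n _ ⟨n-2, by omega⟩ ⟨0, by omega⟩]
    · simp only [Fin.val_mk, and_true, true_and]
      split_ifs <;> first | ring1 | (exfalso; omega)
    · intro i j hij
      have hij' : (i:ℕ) ≠ n-2 ∨ (j:ℕ) ≠ 0 := by
        rcases hij with h|h
        exacts [Or.inl (by simpa [Fin.ext_iff] using h), Or.inr (by simpa [Fin.ext_iff] using h)]
      have hi := i.isLt
      split_ifs <;> first | ring1 | (exfalso; omega)
  have S3 : (∑ i : Fin n, ∑ j : Fin n, x i * y j *
      if (i:ℕ) + 1 = 1 ∧ (j:ℕ) + 1 = n - 1 then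
        β * (if (k:ℕ) + 1 = n then (1:ℂ) else 0) else 0)
      = (if (k:ℕ)+1 = n then β * (x ⟨0, by omega⟩ * y ⟨n-2, by omega⟩) else 0) := by
    rw [sum2_eq n _ ⟨0, by omega⟩ ⟨n-2, by omega⟩]
    · simp only [Fin.val_mk, and_true, true_and]
      split_ifs <;> first | ring1 | (exfalso; omega)
    · intro i j hij
      have hij' : (i:ℕ) ≠ 0 ∨ (j:ℕ) ≠ n-2 := by
        rcases hij with h|h
        exacts [Or.inl (by simpa [Fin.ext_iff] using h), Or.inr (by simpa [Fin.ext_iff] using h)]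
      have hj := j.isLt
      split_ifs <;> first | ring1 | (exfalso; omega)
  have S4 : (∑ i : Fin n, ∑ j : Fin n, x i * y j *
      if (i:ℕ) + 1 = n - 1 ∧ (j:ℕ) + 1 = n - 1 then
        γ * (if (k:ℕ) + 1 = n then (1:ℂ) else 0) else 0)
      = (if (k:ℕ)+1 = n then γ * (x ⟨n-2, by omega⟩ * y ⟨n-2, by omega⟩) else 0) := by
    rw [sum2_eq n _ ⟨n-2, by omega⟩ ⟨n-2, by omega⟩]
    · simp only [Fin.val_mk, and_true, true_and]
      split_ifs <;> first | ring1 | (exfalso; omega)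
    · intro i j hij
      have hij' : (i:ℕ) ≠ n-2 ∨ (j:ℕ) ≠ n-2 := by
        rcases hij with h|h
        exacts [Or.inl (by simpa [Fin.ext_iff] using h), Or.inr (by simpa [Fin.ext_iff] using h)]
      have hi := i.isLt
      have hj := j.isLt
      split_ifs <;> first | ring1 | (exfalso; omega)
  unfold scBr Lc
  simp only [Finset.sum_apply, Pi.smul_apply, Pi.add_apply, smul_eq_mul,
    apply_ite (fun f : Fin n → ℂ => f k), Pi.zero_apply, stdE, mul_add]
  simp only [Finset.sum_add_distrib]
  rw [S1, S2, S3, S4]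
  split_ifs <;> ring1

lemma sumIcc_apply (n l u : ℕ) (f : ℕ → ℂ) (k : Fin n) :
    (∑ t ∈ Finset.Icc l u, f t • stdE n t) k
      = if l ≤ (k:ℕ)+1 ∧ (k:ℕ)+1 ≤ u then f ((k:ℕ)+1) else 0 := by
  rw [Finset.sum_apply]
  simp only [Pi.smul_apply, smul_eq_mul, stdE, mul_ite, mul_one, mul_zero]
  rw [show (∑ t ∈ Finset.Icc l u, if (k:ℕ)+1 = t then f t else 0)
      = ∑ t ∈ Finset.Icc l u, if t = (k:ℕ)+1 then f t else 0 from
    Finset.sum_congr rfl (fun t _ => by simp [eq_comm])]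
  rw [Finset.sum_ite_eq' (Finset.Icc l u) ((k:ℕ)+1) f]
  simp [Finset.mem_Icc]

lemma br_e_i1 (n : ℕ) (hn : 5 ≤ n) (α β γ : ℂ) (i : ℕ) (h1 : 1 ≤ i) (h3 : i ≤ n-3) :
    scBr n (Lc n α β γ) (stdE n i) (stdE n 1) = stdE n (i+1) := by
  funext k
  have hk := k.isLt
  rw [scBr_Lc_apply n hn]
  simp only [stdE, Fin.val_mk]
  split_ifs <;> first | ring1 | (exfalso; omega)

lemma br_en1_1 (n : ℕ) (hn : 5 ≤ n) (α β γ : ℂ) :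
    scBr n (Lc n α β γ) (stdE n (n-1)) (stdE n 1) = stdE n n + α • stdE n 2 := by
  funext k
  have hk := k.isLt
  rw [scBr_Lc_apply n hn]
  simp only [stdE, Fin.val_mk, Pi.add_apply, Pi.smul_apply, smul_eq_mul]
  split_ifs <;> first | ring1 | (exfalso; omega)

lemma br_en_1 (n : ℕ) (hn : 5 ≤ n) (α β γ : ℂ) :
    scBr n (Lc n α β γ) (stdE n n) (stdE n 1) = 0 := by
  funext k
  have hk := k.isLt
  rw [scBr_Lc_apply n hn]
  simp only [stdE, Fin.val_mk, Pi.zero_apply]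
  split_ifs <;> first | ring1 | (exfalso; omega)

lemma br_1_en1 (n : ℕ) (hn : 5 ≤ n) (α β γ : ℂ) :
    scBr n (Lc n α β γ) (stdE n 1) (stdE n (n-1)) = β • stdE n n := by
  funext k
  have hk := k.isLt
  rw [scBr_Lc_apply n hn]
  simp only [stdE, Fin.val_mk, Pi.smul_apply, smul_eq_mul]
  split_ifs <;> first | ring1 | (exfalso; omega)

lemma br_en1_en1 (n : ℕ) (hn : 5 ≤ n) (α β γ : ℂ) :
    scBr n (Lc n α β γ) (stdE n (n-1)) (stdE n (n-1)) = γ • stdE n n := by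
  funext k
  have hk := k.isLt
  rw [scBr_Lc_apply n hn]
  simp only [stdE, Fin.val_mk, Pi.smul_apply, smul_eq_mul]
  split_ifs <;> first | ring1 | (exfalso; omega)

/-- Component spec of `d e_i` for `2 ≤ i ≤ n-2`. -/
def Dspec (n : ℕ) (α β : ℂ) (a : ℕ → ℂ) (i p : ℕ) : ℂ :=
  (if p = i then (i:ℂ) * a 1 + α * a (n-1) else 0)
  + (if i+1 ≤ p ∧ p ≤ n-2 then a (p - i + 1) else 0)
  + (if i = 2 ∧ p = n then a (n-1) + β * a (n-1) else 0)

/-- Component spec of `d e_n`. -/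
def Cspec (n : ℕ) (α β γ : ℂ) (a b : ℕ → ℂ) (p : ℕ) : ℂ :=
  (if 2 ≤ p ∧ p ≤ n-2 then b (p-1) else 0)
  + (if p = 2 then α * b (n-1) - α * a 1 - α * α * a (n-1) else 0)
  + (if 3 ≤ p ∧ p ≤ n-2 then -(α * a (p-1)) else 0)
  + (if p = n then b (n-1) + a 1 + γ * a (n-1) - α * (a (n-1) + β * a (n-1)) else 0)

set_option maxHeartbeats 4000000 in
theorem derivations_of_L (n : ℕ) (hn : 5 ≤ n) (α β γ : ℂ)
    (d : (Fin n → ℂ) →ₗ[ℂ] (Fin n → ℂ)) (hd : IsDer n (Lc n α β γ) d) :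
    ∃ a b : ℕ → ℂ,
      d (stdE n 1) = ∑ t ∈ Finset.Icc 1 n, a t • stdE n t ∧
      d (stdE n 2) = (2 * a 1 + α * a (n - 1)) • stdE n 2
          + (∑ t ∈ Finset.Icc 3 (n - 2), a (t - 1) • stdE n t)
          + (a (n - 1) + β * a (n - 1)) • stdE n n ∧
      (∀ i : ℕ, 3 ≤ i → i ≤ n - 2 →
        d (stdE n i) = ((i : ℂ) * a 1 + α * a (n - 1)) • stdE n i
          + ∑ t ∈ Finset.Icc (i + 1) (n - 2), a (t - i + 1) • stdE n t) ∧
      d (stdE n (n - 1)) = ∑ t ∈ Finset.Icc 2 n, b t • stdE n t ∧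
      d (stdE n n) = (b (n - 3) - α * a (n - 3)) • stdE n (n - 2)
          + (b (n - 1) + a 1 + γ * a (n - 1) - α * (1 + β) * a (n - 1)) • stdE n n ∧
      (∀ i : ℕ, 2 ≤ i → i ≤ n - 4 → b i = α * a i) ∧
      β * (b (n - 3) - α * a (n - 3)) = 0 ∧
      γ * (b (n - 3) - α * a (n - 3)) = 0 ∧
      α * b (n - 1) = α * a 1 + α ^ 2 * a (n - 1) ∧
      γ * b (n - 1) = γ * (a 1 + γ * a (n - 1) - α * (1 + β) * a (n - 1)) ∧
      γ * a (n - 1) = β * a (n - 1) * (γ - α * (1 + β)) := by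
  classical
  set a : ℕ → ℂ := fun t => if h : t - 1 < n then d (stdE n 1) ⟨t-1, h⟩ else 0 with ha_def
  set b : ℕ → ℂ := fun t => if h : t - 1 < n then d (stdE n (n-1)) ⟨t-1, h⟩ else 0 with hb_def
  have ha : ∀ (m : ℕ) (h : m < n), d (stdE n 1) ⟨m, h⟩ = a (m+1) := by
    intro m h
    simp [ha_def, h]
  have hb : ∀ (m : ℕ) (h : m < n), d (stdE n (n-1)) ⟨m, h⟩ = b (m+1) := by
    intro m h
    simp [hb_def, h]
  have ha' : ∀ k : Fin n, d (stdE n 1) k = a ((k:ℕ)+1) := by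
    intro k
    have := ha k.1 k.2
    simpa using this
  have hb' : ∀ k : Fin n, d (stdE n (n-1)) k = b ((k:ℕ)+1) := by
    intro k
    have := hb k.1 k.2
    simpa using this
  -- components of d e_i for 2 ≤ i ≤ n-2
  have hD : ∀ i : ℕ, 2 ≤ i → i ≤ n-2 → ∀ k : Fin n,
      d (stdE n i) k = Dspec n α β a i ((k:ℕ)+1) := by
    intro i hi2
    induction i, hi2 using Nat.le_induction with
    | base =>
      intro _ k
      have hk := k.isLt
      have h2 := hd (stdE n 1) (stdE n 1)
      rw [br_e_i1 n hn α β γ 1 (by omega) (by omega)] at h2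
      norm_num at h2
      have h2k := congrFun h2 k
      rw [Pi.add_apply, scBr_Lc_apply n hn, scBr_Lc_apply n hn] at h2k
      rw [ha ((k:ℕ)-1) (by omega), ha 0 (by omega), ha (n-2) (by omega)] at h2k
      rw [h2k]
      simp only [Dspec, stdE, Fin.val_mk]
      norm_num
      rcases Nat.eq_zero_or_pos (k:ℕ) with h0 | h0
      · split_ifs <;> first | ring1 | (exfalso; omega)
      · by_cases hk1 : (k:ℕ) = 1
        · simp only [hk1]
          rw [show n-2+1 = n-1 from by omega]
          norm_num
          split_ifs <;> first | ring1 | (push_cast; ring1) | (exfalso; omega)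
        · rw [show (k:ℕ)-1+1 = (k:ℕ) from by omega, show (k:ℕ)+1-2+1 = (k:ℕ) from by omega,
            show n-2+1 = n-1 from by omega]
          split_ifs <;> first | ring1 | (exfalso; omega)
    | succ i hi ih =>
      intro hin k
      have hk := k.isLt
      have ih' := ih (by omega)
      have h3 := hd (stdE n i) (stdE n 1)
      rw [br_e_i1 n hn α β γ i (by omega) (by omega)] at h3
      have h3k := congrFun h3 k
      rw [Pi.add_apply, scBr_Lc_apply n hn, scBr_Lc_apply n hn] at h3k
      rw [ih' ⟨(k:ℕ)-1, by omega⟩, ih' ⟨0, by omega⟩, ih' ⟨n-2, by omega⟩,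
        ha 0 (by omega), ha (n-2) (by omega)] at h3k
      simp only [Fin.val_mk] at h3k
      have hz1 : Dspec n α β a i (n-2+1) = 0 := by
        simp only [Dspec]; split_ifs <;> first | ring1 | (exfalso; omega)
      have hz2 : Dspec n α β a i (0+1) = 0 := by
        simp only [Dspec]; split_ifs <;> first | ring1 | (exfalso; omega)
      have hs1 : stdE n i ⟨n-2, by omega⟩ = 0 := by
        simp only [stdE, Fin.val_mk]; rw [if_neg (by omega)]
      have hs2 : stdE n i ⟨0, by omega⟩ = 0 := by
        simp only [stdE, Fin.val_mk]; rw [if_neg (by omega)]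
      rw [hz1, hz2, hs1, hs2] at h3k
      rw [h3k]
      simp only [Dspec, stdE, Fin.val_mk]
      rcases Nat.eq_zero_or_pos (k:ℕ) with h0 | h0
      · split_ifs <;> first | ring1 | (exfalso; omega)
      · by_cases hki : (k:ℕ) = i
        · simp only [hki]
          rw [show i-1+1 = i from by omega, show i+1-(i+1)+1 = 1 from by omega,
            show n-2+1 = n-1 from by omega]
          split_ifs <;> first | ring1 | (push_cast; ring1) | (exfalso; omega)
        · rw [show (k:ℕ)-1+1 = (k:ℕ) from by omega,
            show (k:ℕ)+1-(i+1)+1 = (k:ℕ)-i+1 from by omega]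
          split_ifs <;> first | ring1 | (exfalso; omega)
  have hD2' := hD 2 (by omega) (by omega)
  -- components of d e_n
  have h4 := hd (stdE n (n-1)) (stdE n 1)
  rw [br_en1_1 n hn α β γ, map_add, map_smul] at h4
  have h4' := eq_sub_iff_add_eq.mpr h4
  have hC0' : ∀ k : Fin n, d (stdE n n) k = Cspec n α β γ a b ((k:ℕ)+1) := by
    intro k
    have hk := k.isLt
    have h4k := congrFun h4' k
    simp only [Pi.add_apply, Pi.sub_apply, Pi.smul_apply, smul_eq_mul] at h4k
    rw [scBr_Lc_apply n hn, scBr_Lc_apply n hn] at h4k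
    simp only [hb', ha', hD2'] at h4k
    rw [h4k]
    simp only [Cspec, Dspec, stdE, Fin.val_mk, eq_self_iff_true, true_and, and_true]
    norm_num
    rcases Nat.eq_zero_or_pos (k:ℕ) with h0 | h0
    · split_ifs <;> first | ring1 | (exfalso; omega)
    · rw [show (k:ℕ)-1+1 = (k:ℕ) from by omega, show (k:ℕ)+1-2+1 = (k:ℕ) from by omega,
        show n-2+1 = n-1 from by omega]
      split_ifs <;> first | ring1 | (exfalso; omega)
  have hCn1 : Cspec n α β γ a b (n-1) = 0 := by
    simp only [Cspec]; split_ifs <;> first | ring1 | (exfalso; omega)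
  have hC1 : Cspec n α β γ a b 1 = 0 := by
    simp only [Cspec]; split_ifs <;> first | ring1 | (exfalso; omega)
  -- positions 1..n-3 of d e_n vanish
  have h5 := hd (stdE n n) (stdE n 1)
  rw [br_en_1 n hn α β γ, map_zero] at h5
  have hCmid : ∀ q : ℕ, 1 ≤ q → q ≤ n-3 → Cspec n α β γ a b q = 0 := by
    intro q h1 h2
    have h5k := congrFun h5.symm (⟨q, by omega⟩ : Fin n)
    simp only [Pi.add_apply, Pi.zero_apply] at h5k
    rw [scBr_Lc_apply n hn, scBr_Lc_apply n hn] at h5k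
    simp only [hC0', ha'] at h5k
    simp only [stdE, Fin.val_mk] at h5k
    norm_num at h5k
    rw [show q-1+1 = q from by omega, show n-2+1 = n-1 from by omega] at h5k
    rw [hCn1, hC1] at h5k
    split_ifs at h5k <;>
      first
        | (exfalso; omega)
        | linear_combination h5k
        | linear_combination -h5k
  -- b 1 = 0
  have h6 := hd (stdE n 1) (stdE n (n-1))
  rw [br_1_en1 n hn α β γ, map_smul] at h6
  have hb1 : b 1 = 0 := by
    have h6k := congrFun h6 (⟨1, by omega⟩ : Fin n)
    simp only [Pi.add_apply, Pi.smul_apply, smul_eq_mul] at h6k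
    rw [scBr_Lc_apply n hn, scBr_Lc_apply n hn] at h6k
    simp only [hC0', ha', hb'] at h6k
    simp only [stdE, Fin.val_mk] at h6k
    norm_num at h6k
    rw [show n-2+1 = n-1 from by omega] at h6k
    rw [hCmid 2 (by omega) (by omega)] at h6k
    split_ifs at h6k <;>
      first
        | (exfalso; omega)
        | linear_combination h6k
        | linear_combination -h6k
  -- evaluations of Cspec at n-2 and n
  have hCn2v : Cspec n α β γ a b (n-2) = b (n-3) - α * a (n-3) := by
    simp only [Cspec]
    rw [show n-2-1 = n-3 from by omega]
    split_ifs <;> first | ring1 | (exfalso; omega)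
  have hCnv : Cspec n α β γ a b n
      = b (n-1) + a 1 + γ * a (n-1) - α * (a (n-1) + β * a (n-1)) := by
    simp only [Cspec]
    split_ifs <;> first | ring1 | (exfalso; omega)
  have h7 := hd (stdE n (n-1)) (stdE n (n-1))
  rw [br_en1_en1 n hn α β γ, map_smul] at h7
  -- facts at position n-2
  have factbeta : β * (b (n-3) - α * a (n-3)) = 0 := by
    have h6k := congrFun h6 (⟨n-3, by omega⟩ : Fin n)
    simp only [Pi.add_apply, Pi.smul_apply, smul_eq_mul] at h6k
    rw [scBr_Lc_apply n hn, scBr_Lc_apply n hn] at h6k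
    simp only [hC0', ha', hb'] at h6k
    simp only [stdE, Fin.val_mk] at h6k
    norm_num at h6k
    rw [show n-3+1 = n-2 from by omega, show n-2+1 = n-1 from by omega] at h6k
    rw [hCn2v] at h6k
    split_ifs at h6k <;>
      first
        | (exfalso; omega)
        | linear_combination h6k
        | linear_combination -h6k
  have factgamma : γ * (b (n-3) - α * a (n-3)) = 0 := by
    have h7k := congrFun h7 (⟨n-3, by omega⟩ : Fin n)
    simp only [Pi.add_apply, Pi.smul_apply, smul_eq_mul] at h7k
    rw [scBr_Lc_apply n hn, scBr_Lc_apply n hn] at h7k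
    simp only [hC0', hb'] at h7k
    simp only [stdE, Fin.val_mk] at h7k
    norm_num at h7k
    rw [show n-3+1 = n-2 from by omega, show n-2+1 = n-1 from by omega] at h7k
    rw [hCn2v] at h7k
    split_ifs at h7k <;>
      first
        | (exfalso; omega)
        | linear_combination h7k
        | linear_combination -h7k
  -- facts at position n
  have fact6 : γ * a (n-1) = β * a (n-1) * (γ - α * (1 + β)) := by
    have h6k := congrFun h6 (⟨n-1, by omega⟩ : Fin n)
    simp only [Pi.add_apply, Pi.smul_apply, smul_eq_mul] at h6k
    rw [scBr_Lc_apply n hn, scBr_Lc_apply n hn] at h6k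
    simp only [hC0', ha', hb'] at h6k
    simp only [stdE, Fin.val_mk] at h6k
    norm_num at h6k
    rw [show n-1+1 = n from by omega, show n-2+1 = n-1 from by omega] at h6k
    rw [hCnv] at h6k
    split_ifs at h6k <;>
      first
        | (exfalso; omega)
        | linear_combination h6k
        | linear_combination -h6k
  have fact5 : γ * b (n-1) = γ * (a 1 + γ * a (n-1) - α * (1 + β) * a (n-1)) := by
    have h7k := congrFun h7 (⟨n-1, by omega⟩ : Fin n)
    simp only [Pi.add_apply, Pi.smul_apply, smul_eq_mul] at h7k
    rw [scBr_Lc_apply n hn, scBr_Lc_apply n hn] at h7k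
    simp only [hC0', hb'] at h7k
    simp only [stdE, Fin.val_mk] at h7k
    norm_num at h7k
    rw [show n-1+1 = n from by omega, show n-2+1 = n-1 from by omega] at h7k
    rw [hCnv, hb1] at h7k
    split_ifs at h7k <;>
      first
        | (exfalso; omega)
        | linear_combination h7k
        | linear_combination -h7k
        | linear_combination -h7k + (1+β) * hb1
        | linear_combination h7k - (1+β) * hb1
  -- fact 4
  have fact4 : α * b (n-1) = α * a 1 + α ^ 2 * a (n-1) := by
    have e2 := hCmid 2 (by omega) (by omega)
    simp only [Cspec] at e2
    rw [show (2:ℕ)-1 = 1 from by norm_num, hb1] at e2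
    split_ifs at e2 <;>
      first
        | (exfalso; omega)
        | linear_combination e2
        | linear_combination -e2
        | linear_combination e2 - hb1
        | linear_combination -e2 - hb1
        | linear_combination e2 + hb1
        | linear_combination -e2 + hb1
  -- b i = α a i
  have factbi : ∀ i : ℕ, 2 ≤ i → i ≤ n-4 → b i = α * a i := by
    intro i h1 h2
    have e := hCmid (i+1) (by omega) (by omega)
    simp only [Cspec] at e
    rw [show i+1-1 = i from by omega] at e
    split_ifs at e <;>
      first
        | (exfalso; omega)
        | linear_combination e
        | linear_combination -e
  -- shape of Cspec
  have hCshape : ∀ p : ℕ, 1 ≤ p → p ≤ n →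
      Cspec n α β γ a b p = (if p = n-2 then b (n-3) - α * a (n-3) else 0)
        + (if p = n then b (n-1) + a 1 + γ * a (n-1) - α * (1+β) * a (n-1) else 0) := by
    intro p h1 h2
    by_cases hp : p ≤ n-3
    · rw [hCmid p h1 hp, if_neg (by omega), if_neg (by omega)]
      norm_num
    · by_cases hp2 : p = n-2
      · subst hp2
        rw [hCn2v, if_pos rfl, if_neg (by omega)]
        ring
      · simp only [Cspec]
        split_ifs <;> first | ring1 | (exfalso; omega)
  refine ⟨a, b, ?_, ?_, ?_, ?_, ?_, factbi, factbeta, factgamma, fact4, fact5, fact6⟩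
  · funext k
    have hk := k.isLt
    rw [ha' k, sumIcc_apply, if_pos (by omega : 1 ≤ (k:ℕ)+1 ∧ (k:ℕ)+1 ≤ n)]
  · funext k
    have hk := k.isLt
    rw [hD2' k]
    simp only [Dspec, Pi.add_apply, Pi.smul_apply, smul_eq_mul, sumIcc_apply, stdE, eq_self_iff_true, true_and, and_true]
    rcases Nat.eq_zero_or_pos (k:ℕ) with h0 | h0
    · split_ifs <;> first | ring1 | (push_cast; ring1) | (exfalso; omega)
    · rw [show (k:ℕ)+1-2+1 = (k:ℕ) from by omega, show (k:ℕ)+1-1 = (k:ℕ) from by omega]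
      split_ifs <;> first | ring1 | (push_cast; ring1) | (exfalso; omega)
  · intro i h3 h2
    funext k
    have hk := k.isLt
    rw [hD i (by omega) h2 k]
    simp only [Dspec, Pi.add_apply, Pi.smul_apply, smul_eq_mul, sumIcc_apply, stdE, eq_self_iff_true, true_and, and_true]
    split_ifs <;> first | ring1 | (push_cast; ring1) | (exfalso; omega)
  · funext k
    have hk := k.isLt
    rw [hb' k, sumIcc_apply]
    by_cases hk0 : (k:ℕ) = 0
    · rw [if_neg (by omega), show (k:ℕ)+1 = 1 from by omega]
      exact hb1
    · rw [if_pos (by omega : 2 ≤ (k:ℕ)+1 ∧ (k:ℕ)+1 ≤ n)]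
  · funext k
    have hk := k.isLt
    rw [hC0' k, hCshape ((k:ℕ)+1) (by omega) (by omega)]
    simp only [Pi.add_apply, Pi.smul_apply, smul_eq_mul, stdE]
    split_ifs <;> first | ring1 | (exfalso; omega)
end
end

section
/- Let n ≥ 5 be an integer and let (α,β,γ) be one of (0,0,1), (1,1,0), (1,1,1), (1,2,4), or (1,0,γ) with γ ≠ 0. Then there is no solvable complex Leibniz algebra R of dimension n+1 whose nilradical is isomorphic to the n-dimensional algebra 𝓛(α,β,γ). -/
open scoped BigOperators

noncomputable section

/-- A complex Leibniz algebra structure on the module `R`. -/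
structure LeibnizAlgStr (R : Type) [AddCommGroup R] [Module ℂ R] where
  br : R →ₗ[ℂ] R →ₗ[ℂ] R
  leibniz : ∀ x y z : R, br x (br y z) = br (br x y) z - br (br x z) y

section GeneralDefs

variable {R : Type} [AddCommGroup R] [Module ℂ R]

/-- The span of all brackets `[a, b]` with `a ∈ A`, `b ∈ C`. -/
def bracketSpan (B : LeibnizAlgStr R) (A C : Submodule ℂ R) : Submodule ℂ R :=
  Submodule.span ℂ {z | ∃ a ∈ A, ∃ c ∈ C, z = B.br a c}

/-- Derived series: `derivedSer B k = L^[k+1]`. -/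
def derivedSer (B : LeibnizAlgStr R) : ℕ → Submodule ℂ R
  | 0 => ⊤
  | k + 1 => bracketSpan B (derivedSer B k) (derivedSer B k)

/-- Solvability: some term of the derived series vanishes. -/
def IsSolvableAlg (B : LeibnizAlgStr R) : Prop := ∃ m, derivedSer B m = ⊥

/-- Lower central series of a subspace `I` (as an algebra): `idealLCS B I k = I^{k+1}`. -/
def idealLCS (B : LeibnizAlgStr R) (I : Submodule ℂ R) : ℕ → Submodule ℂ R
  | 0 => I
  | k + 1 => bracketSpan B (idealLCS B I k) I

/-- `I` is a two-sided ideal. -/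
def IsIdeal (B : LeibnizAlgStr R) (I : Submodule ℂ R) : Prop :=
  ∀ x ∈ I, ∀ y : R, B.br x y ∈ I ∧ B.br y x ∈ I

/-- `I` is a nilpotent two-sided ideal. -/
def IsNilpotentIdeal (B : LeibnizAlgStr R) (I : Submodule ℂ R) : Prop :=
  IsIdeal B I ∧ ∃ m, idealLCS B I m = ⊥

/-- `I` is the nilradical: the largest nilpotent two-sided ideal. -/
def IsNilradical (B : LeibnizAlgStr R) (I : Submodule ℂ R) : Prop :=
  IsNilpotentIdeal B I ∧ ∀ J : Submodule ℂ R, IsNilpotentIdeal B J → J ≤ I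

/-- The nilradical of `B` is isomorphic (as a Leibniz algebra) to the `n`-dimensional
algebra with structure constants `c`. -/
def NilradIsoModel (B : LeibnizAlgStr R) (n : ℕ) (c : ℕ → ℕ → Fin n → ℂ) : Prop :=
  ∃ I : Submodule ℂ R, IsNilradical B I ∧
    ∃ g : (Fin n → ℂ) →ₗ[ℂ] R, Function.Injective g ∧ LinearMap.range g = I ∧
      ∀ u v : Fin n → ℂ, g (scBr n c u v) = B.br (g u) (g v)

end GeneralDefs

section ModelFacts

variable {n : ℕ} {α β γ : ℂ}

lemma ap_std (P : Prop) [Decidable P] (k : ℕ) (j : Fin n) :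
    (if P then stdE n k else (0 : Fin n → ℂ)) j = if P ∧ (j : ℕ) + 1 = k then 1 else 0 := by
  by_cases h : P
  · simp [h, stdE]
  · simp [h]

lemma ap_two (P : Prop) [Decidable P] (j : Fin n) :
    (if P then stdE n n + α • stdE n 2 else (0 : Fin n → ℂ)) j =
      (if P ∧ (j : ℕ) + 1 = n then 1 else 0) + (if P ∧ (j : ℕ) + 1 = 2 then α else 0) := by
  by_cases h : P
  · simp only [h, if_true, true_and, Pi.add_apply, Pi.smul_apply, stdE, smul_eq_mul,
      mul_ite, mul_one, mul_zero]
  · simp [h]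

lemma ap_smul (c : ℂ) (P : Prop) [Decidable P] (j : Fin n) :
    (if P then c • stdE n n else (0 : Fin n → ℂ)) j = if P ∧ (j : ℕ) + 1 = n then c else 0 := by
  by_cases h : P
  · simp only [h, if_true, true_and, Pi.smul_apply, stdE, smul_eq_mul, mul_ite, mul_one, mul_zero]
  · simp [h]

lemma Lc_apply (i jn : ℕ) (j : Fin n) :
    Lc n α β γ i jn j =
      (if (1 ≤ i ∧ i ≤ n - 3 ∧ jn = 1) ∧ (j : ℕ) + 1 = i + 1 then 1 else 0)
      + ((if (i = n - 1 ∧ jn = 1) ∧ (j : ℕ) + 1 = n then 1 else 0)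
        + (if (i = n - 1 ∧ jn = 1) ∧ (j : ℕ) + 1 = 2 then α else 0))
      + (if (i = 1 ∧ jn = n - 1) ∧ (j : ℕ) + 1 = n then β else 0)
      + (if (i = n - 1 ∧ jn = n - 1) ∧ (j : ℕ) + 1 = n then γ else 0) := by
  simp only [Lc, Pi.add_apply, ap_std, ap_two, ap_smul]

lemma sum_pick (u : Fin n → ℂ) (c : ℂ) (P : Fin n → Prop) [DecidablePred P] (k : Fin n)
    (huniq : ∀ m, P m ↔ m = k) : ∑ i : Fin n, u i * (if P i then c else 0) = u k * c := by
  rw [Finset.sum_eq_single k]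
  · rw [if_pos ((huniq k).2 rfl)]
  · intro i _ hi
    rw [if_neg (fun h => hi ((huniq i).1 h)), mul_zero]
  · intro h; exact absurd (Finset.mem_univ _) h

lemma sum_none (u : Fin n → ℂ) (c : ℂ) (P : Fin n → Prop) [DecidablePred P]
    (hnone : ∀ m, ¬ P m) : ∑ i : Fin n, u i * (if P i then c else 0) = 0 := by
  apply Finset.sum_eq_zero
  intro i _
  rw [if_neg (hnone i), mul_zero]

lemma col1 (hn : 5 ≤ n) (u : Fin n → ℂ) (j : Fin n) :
    ∑ i : Fin n, u i * Lc n α β γ ((i : ℕ) + 1) 1 j =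
      (if 2 ≤ (j : ℕ) + 1 ∧ (j : ℕ) + 1 ≤ n - 2 then
          u ⟨(j : ℕ) - 1, lt_of_le_of_lt (Nat.sub_le _ _) j.isLt⟩ else 0)
      + ((if (j : ℕ) + 1 = n then u ⟨n - 2, by omega⟩ else 0)
        + (if (j : ℕ) + 1 = 2 then α * u ⟨n - 2, by omega⟩ else 0)) := by
  simp only [Lc_apply, mul_add, Finset.sum_add_distrib]
  have e4 : ∑ i : Fin n, u i * (if ((i:ℕ)+1 = 1 ∧ (1:ℕ) = n - 1) ∧ (j : ℕ) + 1 = n then β else 0) = 0 :=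
    sum_none u β _ (fun m => by intro h; omega)
  have e5 : ∑ i : Fin n, u i * (if ((i:ℕ)+1 = n - 1 ∧ (1:ℕ) = n - 1) ∧ (j : ℕ) + 1 = n then γ else 0) = 0 :=
    sum_none u γ _ (fun m => by intro h; omega)
  rw [e4, e5, add_zero, add_zero]
  congr 1
  · by_cases hj : 2 ≤ (j : ℕ) + 1 ∧ (j : ℕ) + 1 ≤ n - 2
    · rw [if_pos hj,
        sum_pick u 1 _ (⟨(j : ℕ) - 1, lt_of_le_of_lt (Nat.sub_le _ _) j.isLt⟩ : Fin n)
          (fun m => by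
            constructor
            · intro h; exact Fin.ext (by simp only [Fin.val_mk, true_and, and_true]; omega)
            · intro h; subst h; simp only [Fin.val_mk, true_and, and_true]; omega),
        mul_one]
    · rw [if_neg hj]
      exact sum_none u 1 _ (fun m => by intro h; exact hj (by omega))
  · congr 1
    · by_cases hj : (j : ℕ) + 1 = n
      · rw [if_pos hj, sum_pick u 1 _ (⟨n - 2, by omega⟩ : Fin n)
          (fun m => by
            constructor
            · intro h; exact Fin.ext (by simp only [Fin.val_mk, true_and, and_true]; omega)
            · intro h; subst h; simp only [Fin.val_mk, true_and, and_true]; omega), mul_one]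
      · rw [if_neg hj]
        exact sum_none u 1 _ (fun m => by intro h; exact hj h.2)
    · by_cases hj : (j : ℕ) + 1 = 2
      · rw [if_pos hj, sum_pick u α _ (⟨n - 2, by omega⟩ : Fin n)
          (fun m => by
            constructor
            · intro h; exact Fin.ext (by simp only [Fin.val_mk, true_and, and_true]; omega)
            · intro h; subst h; simp only [Fin.val_mk, true_and, and_true]; omega)]
        ring
      · rw [if_neg hj]
        exact sum_none u α _ (fun m => by intro h; exact hj h.2)

lemma colN (hn : 5 ≤ n) (u : Fin n → ℂ) (j : Fin n) :
    ∑ i : Fin n, u i * Lc n α β γ ((i : ℕ) + 1) (n - 1) j =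
      (if (j : ℕ) + 1 = n then β * u ⟨0, by omega⟩ + γ * u ⟨n - 2, by omega⟩ else 0) := by
  simp only [Lc_apply, mul_add, Finset.sum_add_distrib]
  have e1 : ∑ i : Fin n, u i * (if (1 ≤ (i:ℕ)+1 ∧ (i:ℕ)+1 ≤ n - 3 ∧ n - 1 = 1) ∧ (j : ℕ) + 1 = (i:ℕ)+1 + 1 then 1 else 0) = 0 :=
    sum_none u 1 _ (fun m => by intro h; omega)
  have e2 : ∑ i : Fin n, u i * (if ((i:ℕ)+1 = n - 1 ∧ n - 1 = 1) ∧ (j : ℕ) + 1 = n then 1 else 0) = 0 :=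
    sum_none u 1 _ (fun m => by intro h; omega)
  have e3 : ∑ i : Fin n, u i * (if ((i:ℕ)+1 = n - 1 ∧ n - 1 = 1) ∧ (j : ℕ) + 1 = 2 then α else 0) = 0 :=
    sum_none u α _ (fun m => by intro h; omega)
  rw [e1, e2, e3, zero_add, add_zero, zero_add]
  by_cases hj : (j : ℕ) + 1 = n
  · rw [if_pos hj,
      sum_pick u β _ (⟨0, by omega⟩ : Fin n)
        (fun m => by
          constructor
          · intro h; exact Fin.ext (by simp only [Fin.val_mk, true_and, and_true]; omega)
          · intro h; subst h; simp only [Fin.val_mk, true_and, and_true]; omega),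
      sum_pick u γ _ (⟨n - 2, by omega⟩ : Fin n)
        (fun m => by
          constructor
          · intro h; exact Fin.ext (by simp only [Fin.val_mk, true_and, and_true]; omega)
          · intro h; subst h; simp only [Fin.val_mk, true_and, and_true]; omega)]
    ring
  · rw [if_neg hj,
      sum_none u β _ (fun m => by intro h; exact hj h.2),
      sum_none u γ _ (fun m => by intro h; exact hj h.2), add_zero]

end ModelFacts

section ModelFacts2

variable {n : ℕ} {α β γ : ℂ}

lemma Lc_col_zero (i jn : ℕ) (j : Fin n) (hj1 : jn ≠ 1) (hj2 : jn ≠ n - 1) :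
    Lc n α β γ i jn j = 0 := by
  rw [Lc_apply]
  split_ifs <;> first | (exfalso; omega) | norm_num

lemma Br_apply (hn : 5 ≤ n) (u v : Fin n → ℂ) (j : Fin n) :
    scBr n (Lc n α β γ) u v j =
      v ⟨0, by omega⟩ *
        ((if 2 ≤ (j : ℕ) + 1 ∧ (j : ℕ) + 1 ≤ n - 2 then
            u ⟨(j : ℕ) - 1, lt_of_le_of_lt (Nat.sub_le _ _) j.isLt⟩ else 0)
          + ((if (j : ℕ) + 1 = n then u ⟨n - 2, by omega⟩ else 0)
            + (if (j : ℕ) + 1 = 2 then α * u ⟨n - 2, by omega⟩ else 0)))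
      + v ⟨n - 2, by omega⟩ *
          (if (j : ℕ) + 1 = n then β * u ⟨0, by omega⟩ + γ * u ⟨n - 2, by omega⟩ else 0) := by
  have hne : (⟨0, by omega⟩ : Fin n) ≠ (⟨n - 2, by omega⟩ : Fin n) := by
    intro h
    have := congrArg Fin.val h
    simp only [Fin.val_mk] at this
    omega
  unfold scBr
  simp only [Finset.sum_apply, Pi.smul_apply, smul_eq_mul]
  rw [Finset.sum_comm]
  have key : ∀ j' : Fin n, (∑ i : Fin n, u i * v j' * Lc n α β γ ((i : ℕ) + 1) ((j' : ℕ) + 1) j)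
      = v j' * ∑ i : Fin n, u i * Lc n α β γ ((i : ℕ) + 1) ((j' : ℕ) + 1) j := by
    intro j'
    rw [Finset.mul_sum]
    exact Finset.sum_congr rfl (fun i _ => by ring)
  simp only [key]
  rw [← Finset.sum_subset (Finset.subset_univ ({⟨0, by omega⟩, ⟨n - 2, by omega⟩} : Finset (Fin n)))
    (fun j' _ hj' => by
      have h1 : (j' : ℕ) + 1 ≠ 1 := by
        intro h
        exact hj' (by
          simp only [Finset.mem_insert, Finset.mem_singleton]
          left; exact Fin.ext (by simp only [Fin.val_mk]; omega))
      have h2 : (j' : ℕ) + 1 ≠ n - 1 := by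
        intro h
        exact hj' (by
          simp only [Finset.mem_insert, Finset.mem_singleton]
          right; exact Fin.ext (by simp only [Fin.val_mk]; omega))
      rw [Finset.sum_eq_zero (fun i _ => by rw [Lc_col_zero _ _ _ h1 h2, mul_zero]), mul_zero])]
  rw [Finset.sum_pair hne]
  congr 1
  · have h0 : ((⟨0, by omega⟩ : Fin n) : ℕ) + 1 = 1 := by simp
    rw [show (((⟨0, by omega⟩ : Fin n) : ℕ) + 1) = 1 from h0, col1 hn]
  · have h0 : ((⟨n - 2, by omega⟩ : Fin n) : ℕ) + 1 = n - 1 := by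
      simp only [Fin.val_mk]; omega
    rw [show (((⟨n - 2, by omega⟩ : Fin n) : ℕ) + 1) = n - 1 from h0, colN hn]

end ModelFacts2

section ModelFacts3

variable {n : ℕ} {α β γ : ℂ}

/-- right bracket with `e₁`. -/
lemma Br_wE1 (hn : 5 ≤ n) (w : Fin n → ℂ) (j : Fin n) :
    scBr n (Lc n α β γ) w (stdE n 1) j =
      (if 2 ≤ (j : ℕ) + 1 ∧ (j : ℕ) + 1 ≤ n - 2 then
          w ⟨(j : ℕ) - 1, lt_of_le_of_lt (Nat.sub_le _ _) j.isLt⟩ else 0)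
      + ((if (j : ℕ) + 1 = n then w ⟨n - 2, by omega⟩ else 0)
        + (if (j : ℕ) + 1 = 2 then α * w ⟨n - 2, by omega⟩ else 0)) := by
  rw [Br_apply hn]
  simp only [stdE, Fin.val_mk]
  split_ifs <;> first | (exfalso; omega) | ring1

/-- right bracket with `e_{n-1}`. -/
lemma Br_wEm (hn : 5 ≤ n) (w : Fin n → ℂ) (j : Fin n) :
    scBr n (Lc n α β γ) w (stdE n (n - 1)) j =
      (if (j : ℕ) + 1 = n then β * w ⟨0, by omega⟩ + γ * w ⟨n - 2, by omega⟩ else 0) := by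
  rw [Br_apply hn]
  simp only [stdE, Fin.val_mk]
  split_ifs <;> first | (exfalso; omega) | ring1

/-- left bracket with `e₁`. -/
lemma Br_E1w (hn : 5 ≤ n) (w : Fin n → ℂ) (j : Fin n) :
    scBr n (Lc n α β γ) (stdE n 1) w j =
      w ⟨0, by omega⟩ * (if (j : ℕ) + 1 = 2 then 1 else 0)
      + β * w ⟨n - 2, by omega⟩ * (if (j : ℕ) + 1 = n then 1 else 0) := by
  rw [Br_apply hn]
  simp only [stdE, Fin.val_mk]
  split_ifs <;> first | (exfalso; omega) | ring1

/-- left bracket with `e_{n-1}`. -/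
lemma Br_Emw (hn : 5 ≤ n) (w : Fin n → ℂ) (j : Fin n) :
    scBr n (Lc n α β γ) (stdE n (n - 1)) w j =
      w ⟨0, by omega⟩ * ((if (j : ℕ) + 1 = n then 1 else 0) + α * (if (j : ℕ) + 1 = 2 then 1 else 0))
      + γ * w ⟨n - 2, by omega⟩ * (if (j : ℕ) + 1 = n then 1 else 0) := by
  rw [Br_apply hn]
  simp only [stdE, Fin.val_mk]
  split_ifs <;> first | (exfalso; omega) | ring1

/-- left bracket with `e_k`, `2 ≤ k ≤ n-3`. -/
lemma Br_Ekw (hn : 5 ≤ n) (k : ℕ) (hk2 : 2 ≤ k) (hk3 : k ≤ n - 3) (w : Fin n → ℂ) (j : Fin n) :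
    scBr n (Lc n α β γ) (stdE n k) w j =
      w ⟨0, by omega⟩ * (if (j : ℕ) + 1 = k + 1 then 1 else 0) := by
  rw [Br_apply hn]
  simp only [stdE, Fin.val_mk]
  split_ifs <;> first | (exfalso; omega) | ring1

/-- left bracket with `e_n` vanishes. -/
lemma Br_ENw (hn : 5 ≤ n) (w : Fin n → ℂ) (j : Fin n) :
    scBr n (Lc n α β γ) (stdE n n) w j = 0 := by
  rw [Br_apply hn]
  simp only [stdE, Fin.val_mk]
  split_ifs <;> first | (exfalso; omega) | ring1

/-- chain products. -/
lemma Br_chain (hn : 5 ≤ n) (k : ℕ) (hk1 : 1 ≤ k) (hk3 : k ≤ n - 3) :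
    scBr n (Lc n α β γ) (stdE n k) (stdE n 1) = stdE n (k + 1) := by
  funext j
  rw [Br_wE1 hn]
  simp only [stdE, Fin.val_mk]
  split_ifs <;> first | (exfalso; omega) | ring1

lemma Br_EmE1 (hn : 5 ≤ n) :
    scBr n (Lc n α β γ) (stdE n (n - 1)) (stdE n 1) = stdE n n + α • stdE n 2 := by
  funext j
  rw [Br_wE1 hn]
  simp only [stdE, Fin.val_mk, Pi.add_apply, Pi.smul_apply, smul_eq_mul]
  split_ifs <;> first | (exfalso; omega) | ring1

lemma Br_ENE1 (hn : 5 ≤ n) :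
    scBr n (Lc n α β γ) (stdE n n) (stdE n 1) = 0 := by
  funext j
  rw [Br_wE1 hn]
  simp only [stdE, Fin.val_mk, Pi.zero_apply]
  split_ifs <;> first | (exfalso; omega) | ring1

lemma Br_E1Em (hn : 5 ≤ n) :
    scBr n (Lc n α β γ) (stdE n 1) (stdE n (n - 1)) = β • stdE n n := by
  funext j
  rw [Br_wEm hn]
  simp only [stdE, Fin.val_mk, Pi.smul_apply, smul_eq_mul]
  split_ifs <;> first | (exfalso; omega) | ring1

lemma Br_EmEm (hn : 5 ≤ n) :
    scBr n (Lc n α β γ) (stdE n (n - 1)) (stdE n (n - 1)) = γ • stdE n n := by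
  funext j
  rw [Br_wEm hn]
  simp only [stdE, Fin.val_mk, Pi.smul_apply, smul_eq_mul]
  split_ifs <;> first | (exfalso; omega) | ring1

lemma Br_E2Em (hn : 5 ≤ n) :
    scBr n (Lc n α β γ) (stdE n 2) (stdE n (n - 1)) = 0 := by
  funext j
  rw [Br_wEm hn]
  simp only [stdE, Fin.val_mk, Pi.zero_apply]
  split_ifs <;> first | (exfalso; omega) | ring1

end ModelFacts3

section ModelNil

variable {n : ℕ} {α β γ : ℂ}

/-- support condition: coordinates `< t` (1-based, except coordinate `n`) and coordinate
`n-1` all vanish. -/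
def VtP (n t : ℕ) (w : Fin n → ℂ) : Prop :=
  ∀ j : Fin n, (j : ℕ) + 1 ≠ n → ((j : ℕ) + 1 < t ∨ (j : ℕ) + 1 = n - 1) → w j = 0

lemma VtP_mono {t' t : ℕ} {w : Fin n → ℂ} (h : t' ≤ t) (hw : VtP n t w) : VtP n t' w :=
  fun j h1 h2 => hw j h1 (h2.imp (fun h' => lt_of_lt_of_le h' h) id)

lemma basis_expand (w : Fin n → ℂ) : w = ∑ j : Fin n, w j • stdE n ((j : ℕ) + 1) := by
  funext k
  rw [Finset.sum_apply]
  have : ∀ j : Fin n, (w j • stdE n ((j : ℕ) + 1)) k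
      = w j * (if (fun m : Fin n => (k : ℕ) + 1 = (m : ℕ) + 1) j then 1 else 0) := by
    intro j
    simp only [stdE, Pi.smul_apply, smul_eq_mul]
  simp only [this]
  rw [sum_pick w 1 _ k (fun m => by
    constructor
    · intro h; exact Fin.ext (by omega)
    · intro h; subst h; rfl)]
  ring

/-- the key nilpotency lemma, given the scalar vanishing facts. -/
lemma model_D_nilpotent_aux (hn : 5 ≤ n)
    (D : (Fin n → ℂ) →ₗ[ℂ] (Fin n → ℂ))
    (hder : ∀ u v, D (scBr n (Lc n α β γ) u v) =
      scBr n (Lc n α β γ) (D u) v + scBr n (Lc n α β γ) u (D v))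
    (ha0 : D (stdE n 1) ⟨0, by omega⟩ = 0)
    (ham : D (stdE n 1) ⟨n - 2, by omega⟩ = 0)
    (hb1 : D (stdE n (n - 1)) ⟨0, by omega⟩ = 0)
    (hbm : D (stdE n (n - 1)) ⟨n - 2, by omega⟩ = 0)
    (hDN : D (stdE n n) = 0) :
    ∀ w, (⇑D)^[n] w = 0 := by
  -- the images of e₁ and e_{n-1}
  have hVa : VtP n 2 (D (stdE n 1)) := by
    intro j h1 h2
    have hj : (j : ℕ) + 1 = 1 ∨ (j : ℕ) + 1 = n - 1 := by omega
    rcases hj with hj | hj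
    · rw [show j = (⟨0, by omega⟩ : Fin n) from Fin.ext (by simp only [Fin.val_mk]; omega)]; exact ha0
    · rw [show j = (⟨n - 2, by omega⟩ : Fin n) from Fin.ext (by simp only [Fin.val_mk]; omega)]; exact ham
  have hVb : VtP n 2 (D (stdE n (n - 1))) := by
    intro j h1 h2
    have hj : (j : ℕ) + 1 = 1 ∨ (j : ℕ) + 1 = n - 1 := by omega
    rcases hj with hj | hj
    · rw [show j = (⟨0, by omega⟩ : Fin n) from Fin.ext (by simp only [Fin.val_mk]; omega)]; exact hb1
    · rw [show j = (⟨n - 2, by omega⟩ : Fin n) from Fin.ext (by simp only [Fin.val_mk]; omega)]; exact hbm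
  -- right-bracketing with e₁ raises the filtration
  have hstep : ∀ t (w : Fin n → ℂ), VtP n t w →
      VtP n (t + 1) (scBr n (Lc n α β γ) w (stdE n 1)) := by
    intro t w hw j h1 h2
    rw [Br_wE1 hn]
    have hwm : w ⟨n - 2, by omega⟩ = 0 :=
      hw ⟨n - 2, by omega⟩ (by simp only [Fin.val_mk]; omega)
        (by simp only [Fin.val_mk]; omega)
    rw [if_neg h1]
    by_cases hc : 2 ≤ (j : ℕ) + 1 ∧ (j : ℕ) + 1 ≤ n - 2
    · rw [if_pos hc]
      have hj' : (j : ℕ) < t ∨ (j : ℕ) = n - 1 := by omega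
      have : w ⟨(j : ℕ) - 1, lt_of_le_of_lt (Nat.sub_le _ _) j.isLt⟩ = 0 :=
        hw _ (by simp only [Fin.val_mk]; omega) (by simp only [Fin.val_mk]; omega)
      rw [this, hwm]
      split_ifs <;> ring1
    · rw [if_neg hc, hwm]
      split_ifs <;> ring1
  -- scBr e₁ (D e₁) = 0 and the like
  have hZE1 : scBr n (Lc n α β γ) (stdE n 1) (D (stdE n 1)) = 0 := by
    funext j
    rw [Br_E1w hn, ha0, ham]
    simp only [Pi.zero_apply]
    ring
  -- D on the chain basis vectors
  have hVDk : ∀ m : ℕ, 2 + m ≤ n - 2 → VtP n (2 + m + 1) (D (stdE n (2 + m))) := by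
    intro m
    induction m with
    | zero =>
      intro _
      have h := hder (stdE n 1) (stdE n 1)
      rw [Br_chain hn 1 (by omega) (by omega)] at h
      norm_num at h ⊢
      rw [h, hZE1, add_zero]
      exact hstep 2 _ hVa
    | succ m ih =>
      intro hm
      have h := hder (stdE n (2 + m)) (stdE n 1)
      rw [Br_chain hn (2 + m) (by omega) (by omega)] at h
      have hz : scBr n (Lc n α β γ) (stdE n (2 + m)) (D (stdE n 1)) = 0 := by
        funext j
        rw [Br_Ekw hn (2 + m) (by omega) (by omega), ha0]
        simp only [Pi.zero_apply]
        ring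
      rw [hz, add_zero] at h
      have : VtP n (2 + m + 1 + 1) (D (stdE n (2 + m + 1))) := by
        rw [h]
        exact hstep _ _ (ih (by omega))
      exact this
  -- uniform statement for the chain basis vectors
  have hVbas : ∀ i : Fin n, 2 ≤ (i : ℕ) + 1 → (i : ℕ) + 1 ≤ n - 2 →
      VtP n ((i : ℕ) + 1 + 1) (D (stdE n ((i : ℕ) + 1))) := by
    intro i h1 h2
    obtain ⟨m, hm2⟩ : ∃ m, (i : ℕ) + 1 = 2 + m := ⟨(i : ℕ) + 1 - 2, by omega⟩
    rw [hm2]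
    exact hVDk m (by omega)
  -- all basis vectors are sent into V 2
  have hV2bas : ∀ i : Fin n, VtP n 2 (D (stdE n ((i : ℕ) + 1))) := by
    intro i
    by_cases hiN : (i : ℕ) + 1 = n
    · intro j hj1 hj2
      rw [hiN, hDN, Pi.zero_apply]
    by_cases h1 : (i : ℕ) + 1 = 1
    · rw [h1]; exact hVa
    by_cases hm : (i : ℕ) + 1 = n - 1
    · rw [hm]; exact hVb
    · exact VtP_mono (by omega) (hVbas i (by omega) (by omega))
  have hDsum : ∀ w : Fin n → ℂ, D w = ∑ i : Fin n, w i • D (stdE n ((i : ℕ) + 1)) := by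
    intro w
    conv_lhs => rw [basis_expand w]
    rw [map_sum]
    simp only [map_smul]
  -- applying D raises the filtration
  have hDVt : ∀ t (w : Fin n → ℂ), 2 ≤ t → VtP n t w → VtP n (t + 1) (D w) := by
    intro t w ht hw j h1 h2
    rw [hDsum w, Finset.sum_apply]
    apply Finset.sum_eq_zero
    intro i _
    rw [Pi.smul_apply, smul_eq_mul]
    by_cases hiN : (i : ℕ) + 1 = n
    · rw [hiN, hDN, Pi.zero_apply, mul_zero]
    by_cases hlt : (i : ℕ) + 1 < t ∨ (i : ℕ) + 1 = n - 1
    · rw [hw i hiN hlt, zero_mul]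
    · have := hVbas i (by omega) (by omega) j h1 (by omega)
      rw [this, mul_zero]
  -- base: the image of anything is in V 2
  have hbase : ∀ w : Fin n → ℂ, VtP n 2 (D w) := by
    intro w j h1 h2
    rw [hDsum w, Finset.sum_apply]
    apply Finset.sum_eq_zero
    intro i _
    rw [Pi.smul_apply, smul_eq_mul]
    by_cases hiN : (i : ℕ) + 1 = n
    · rw [hiN, hDN, Pi.zero_apply, mul_zero]
    · rw [hV2bas i j h1 (by omega), mul_zero]
  -- top: V n is killed by D
  have hfinal : ∀ w : Fin n → ℂ, VtP n n w → D w = 0 := by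
    intro w hw
    rw [hDsum w]
    apply Finset.sum_eq_zero
    intro i _
    by_cases hiN : (i : ℕ) + 1 = n
    · rw [hiN, hDN, smul_zero]
    · rw [hw i hiN (by omega), zero_smul]
  have hiter : ∀ s (w : Fin n → ℂ), VtP n (2 + s) ((⇑D)^[s + 1] w) := by
    intro s
    induction s with
    | zero => intro w; exact hbase w
    | succ s ih =>
      intro w
      rw [Function.iterate_succ_apply']
      have := hDVt (2 + s) _ (by omega) (ih w)
      rw [show 2 + s + 1 = 2 + (s + 1) from by omega] at this
      exact this
  intro w
  obtain ⟨m, rfl⟩ : ∃ m, n = m + 1 := ⟨n - 1, by omega⟩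
  have h := hiter (m - 1) w
  rw [show 2 + (m - 1) = m + 1 from by omega, show (m - 1) + 1 = m from by omega] at h
  rw [Function.iterate_succ_apply']
  exact hfinal _ h

end ModelNil

section ModelScalar

variable {n : ℕ} {α β γ : ℂ}

lemma model_scalar_facts (hn : 5 ≤ n)
    (htriple : (α = 0 ∧ β = 0 ∧ γ = 1) ∨ (α = 1 ∧ β = 1 ∧ γ = 0) ∨
      (α = 1 ∧ β = 1 ∧ γ = 1) ∨ (α = 1 ∧ β = 2 ∧ γ = 4) ∨ (α = 1 ∧ β = 0 ∧ γ ≠ 0))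
    (D LL : (Fin n → ℂ) →ₗ[ℂ] (Fin n → ℂ))
    (hder : ∀ u v, D (scBr n (Lc n α β γ) u v) =
      scBr n (Lc n α β γ) (D u) v + scBr n (Lc n α β γ) u (D v))
    (hI5 : ∀ u v, LL (scBr n (Lc n α β γ) u v) =
      scBr n (Lc n α β γ) (LL u) v - scBr n (Lc n α β γ) (LL v) u)
    (hI2 : ∀ u v, scBr n (Lc n α β γ) u (LL v) = - scBr n (Lc n α β γ) u (D v)) :
    D (stdE n 1) ⟨0, by omega⟩ = 0 ∧ D (stdE n 1) ⟨n - 2, by omega⟩ = 0 ∧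
    D (stdE n (n - 1)) ⟨0, by omega⟩ = 0 ∧ D (stdE n (n - 1)) ⟨n - 2, by omega⟩ = 0 ∧
    D (stdE n n) = 0 := by
  have hβγ : β ≠ 0 ∨ γ ≠ 0 := by
    rcases htriple with ⟨h1, h2, h3⟩ | ⟨h1, h2, h3⟩ | ⟨h1, h2, h3⟩ | ⟨h1, h2, h3⟩ | ⟨h1, h2, h3⟩
    · right; rw [h3]; norm_num
    · left; rw [h2]; norm_num
    · left; rw [h2]; norm_num
    · left; rw [h2]; norm_num
    · right; exact h3
  -- step 1 : D e₂
  have hDe2 := hder (stdE n 1) (stdE n 1)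
  rw [Br_chain hn 1 (by omega) (by omega)] at hDe2
  norm_num at hDe2
  have hDe2_N : D (stdE n 2) ⟨n - 1, by omega⟩ =
      D (stdE n 1) ⟨n - 2, by omega⟩ + β * D (stdE n 1) ⟨n - 2, by omega⟩ := by
    have h := congrFun hDe2 (⟨n - 1, by omega⟩ : Fin n)
    rw [Pi.add_apply, Br_wE1 hn, Br_E1w hn] at h
    simp only [Fin.val_mk] at h
    split_ifs at h <;> first | (exfalso; omega) | linear_combination h
  have hDe2_0 : D (stdE n 2) ⟨0, by omega⟩ = 0 := by
    have h := congrFun hDe2 (⟨0, by omega⟩ : Fin n)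
    rw [Pi.add_apply, Br_wE1 hn, Br_E1w hn] at h
    simp only [Fin.val_mk] at h
    split_ifs at h <;> first | (exfalso; omega) | linear_combination h
  have hDe2_m : D (stdE n 2) ⟨n - 2, by omega⟩ = 0 := by
    have h := congrFun hDe2 (⟨n - 2, by omega⟩ : Fin n)
    rw [Pi.add_apply, Br_wE1 hn, Br_E1w hn] at h
    simp only [Fin.val_mk] at h
    split_ifs at h <;> first | (exfalso; omega) | linear_combination h
  -- step 2 : b₁ = 0
  have hb1 : D (stdE n (n - 1)) ⟨0, by omega⟩ = 0 := by
    have h := hder (stdE n 2) (stdE n (n - 1))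
    rw [Br_E2Em hn, map_zero] at h
    have h3 := congrFun h (⟨2, by omega⟩ : Fin n)
    rw [Pi.zero_apply, Pi.add_apply, Br_wEm hn, Br_Ekw hn 2 (by omega) (by omega)] at h3
    rw [hDe2_0, hDe2_m] at h3
    simp only [Fin.val_mk] at h3
    split_ifs at h3 <;> first | (exfalso; omega) | linear_combination -h3
  -- step 3 : D e_n via [e_{n-1}, e_1]
  have hDnEq := hder (stdE n (n - 1)) (stdE n 1)
  rw [Br_EmE1 hn, map_add, map_smul] at hDnEq
  have hmu : D (stdE n n) ⟨n - 1, by omega⟩ =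
      D (stdE n (n - 1)) ⟨n - 2, by omega⟩ + D (stdE n 1) ⟨0, by omega⟩
        + γ * D (stdE n 1) ⟨n - 2, by omega⟩
        - α * (D (stdE n 1) ⟨n - 2, by omega⟩ + β * D (stdE n 1) ⟨n - 2, by omega⟩) := by
    have h := congrFun hDnEq (⟨n - 1, by omega⟩ : Fin n)
    rw [Pi.add_apply, Pi.add_apply, Pi.smul_apply, smul_eq_mul, Br_wE1 hn, Br_Emw hn,
      hDe2_N] at h
    simp only [Fin.val_mk] at h
    split_ifs at h <;> first | (exfalso; omega) | linear_combination h
  -- step 4 : the β-relation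
  have hF4 := hder (stdE n 1) (stdE n (n - 1))
  rw [Br_E1Em hn, map_smul] at hF4
  have hF4n : β * D (stdE n n) ⟨n - 1, by omega⟩ =
      β * D (stdE n 1) ⟨0, by omega⟩ + γ * D (stdE n 1) ⟨n - 2, by omega⟩
        + β * D (stdE n (n - 1)) ⟨n - 2, by omega⟩ := by
    have h := congrFun hF4 (⟨n - 1, by omega⟩ : Fin n)
    rw [Pi.smul_apply, smul_eq_mul, Pi.add_apply, Br_wEm hn, Br_E1w hn] at h
    simp only [Fin.val_mk] at h
    split_ifs at h <;> first | (exfalso; omega) | linear_combination h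
  have hF4m : β * D (stdE n n) ⟨n - 3, by omega⟩ = 0 := by
    have h := congrFun hF4 (⟨n - 3, by omega⟩ : Fin n)
    rw [Pi.smul_apply, smul_eq_mul, Pi.add_apply, Br_wEm hn, Br_E1w hn] at h
    simp only [Fin.val_mk] at h
    split_ifs at h <;> first | (exfalso; omega) | linear_combination h
  -- step 5 : the γ-relation
  have hF5 := hder (stdE n (n - 1)) (stdE n (n - 1))
  rw [Br_EmEm hn, map_smul] at hF5
  have hF5n : γ * D (stdE n n) ⟨n - 1, by omega⟩ =
      β * D (stdE n (n - 1)) ⟨0, by omega⟩ + γ * D (stdE n (n - 1)) ⟨n - 2, by omega⟩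
        + D (stdE n (n - 1)) ⟨0, by omega⟩ * (1 + α * 0)
        + γ * D (stdE n (n - 1)) ⟨n - 2, by omega⟩ := by
    have h := congrFun hF5 (⟨n - 1, by omega⟩ : Fin n)
    rw [Pi.smul_apply, smul_eq_mul, Pi.add_apply, Br_wEm hn, Br_Emw hn] at h
    simp only [Fin.val_mk] at h
    split_ifs at h <;> first | (exfalso; omega) | linear_combination h
  have hF5m : γ * D (stdE n n) ⟨n - 3, by omega⟩ = 0 := by
    have h := congrFun hF5 (⟨n - 3, by omega⟩ : Fin n)
    rw [Pi.smul_apply, smul_eq_mul, Pi.add_apply, Br_wEm hn, Br_Emw hn] at h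
    simp only [Fin.val_mk] at h
    split_ifs at h <;> first | (exfalso; omega) | linear_combination h
  -- step 6 : a_{n-1} = 0
  have ham : D (stdE n 1) ⟨n - 2, by omega⟩ = 0 := by
    rcases htriple with ⟨h1, h2, h3⟩ | ⟨h1, h2, h3⟩ | ⟨h1, h2, h3⟩ | ⟨h1, h2, h3⟩ | ⟨h1, h2, h3⟩
    · subst h1; subst h2; subst h3; linear_combination -hF4n
    · subst h1; subst h2; subst h3; linear_combination hmu / 2 - hF4n / 2
    · subst h1; subst h2; subst h3; linear_combination hmu / 2 - hF4n / 2
    · subst h1; subst h2; subst h3; linear_combination hmu - hF4n / 2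
    · subst h1; subst h2
      have h' : γ * D (stdE n 1) ⟨n - 2, by omega⟩ = 0 := by linear_combination -hF4n
      exact (mul_eq_zero.mp h').resolve_left h3
  -- step 7 : the values of LL on e₁ and e_{n-1} at top coordinates
  have hPeq := hI2 (stdE n 1) (stdE n 1)
  have hP0 : LL (stdE n 1) ⟨0, by omega⟩ = - D (stdE n 1) ⟨0, by omega⟩ := by
    have h := congrFun hPeq (⟨1, by omega⟩ : Fin n)
    rw [Pi.neg_apply, Br_E1w hn, Br_E1w hn] at h
    simp only [Fin.val_mk] at h
    split_ifs at h <;> first | (exfalso; omega) | linear_combination h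
  have hPmβ : β * LL (stdE n 1) ⟨n - 2, by omega⟩ = - (β * D (stdE n 1) ⟨n - 2, by omega⟩) := by
    have h := congrFun hPeq (⟨n - 1, by omega⟩ : Fin n)
    rw [Pi.neg_apply, Br_E1w hn, Br_E1w hn] at h
    simp only [Fin.val_mk] at h
    split_ifs at h <;> first | (exfalso; omega) | linear_combination h
  have hPeq2 := hI2 (stdE n (n - 1)) (stdE n 1)
  have hPmγ : γ * LL (stdE n 1) ⟨n - 2, by omega⟩ = - (γ * D (stdE n 1) ⟨n - 2, by omega⟩) := by
    have h := congrFun hPeq2 (⟨n - 1, by omega⟩ : Fin n)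
    rw [Pi.neg_apply, Br_Emw hn, Br_Emw hn] at h
    simp only [Fin.val_mk] at h
    split_ifs at h <;> first | (exfalso; omega) | linear_combination h - hP0
  have hQeq := hI2 (stdE n 1) (stdE n (n - 1))
  have hQ0 : LL (stdE n (n - 1)) ⟨0, by omega⟩ = - D (stdE n (n - 1)) ⟨0, by omega⟩ := by
    have h := congrFun hQeq (⟨1, by omega⟩ : Fin n)
    rw [Pi.neg_apply, Br_E1w hn, Br_E1w hn] at h
    simp only [Fin.val_mk] at h
    split_ifs at h <;> first | (exfalso; omega) | linear_combination h
  have hQmβ : β * LL (stdE n (n - 1)) ⟨n - 2, by omega⟩ =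
      - (β * D (stdE n (n - 1)) ⟨n - 2, by omega⟩) := by
    have h := congrFun hQeq (⟨n - 1, by omega⟩ : Fin n)
    rw [Pi.neg_apply, Br_E1w hn, Br_E1w hn] at h
    simp only [Fin.val_mk] at h
    split_ifs at h <;> first | (exfalso; omega) | linear_combination h
  have hQeq2 := hI2 (stdE n (n - 1)) (stdE n (n - 1))
  have hQmγ : γ * LL (stdE n (n - 1)) ⟨n - 2, by omega⟩ =
      - (γ * D (stdE n (n - 1)) ⟨n - 2, by omega⟩) := by
    have h := congrFun hQeq2 (⟨n - 1, by omega⟩ : Fin n)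
    rw [Pi.neg_apply, Br_Emw hn, Br_Emw hn] at h
    simp only [Fin.val_mk] at h
    split_ifs at h <;> first | (exfalso; omega) | linear_combination h - hQ0
  -- step 8 : LL e₂ = 0, LL e_n = 0
  have hLe2 : LL (stdE n 2) = 0 := by
    have h := hI5 (stdE n 1) (stdE n 1)
    rw [Br_chain hn 1 (by omega) (by omega), sub_self] at h
    norm_num at h
    exact h
  have hLn : LL (stdE n n) =
      scBr n (Lc n α β γ) (LL (stdE n (n - 1))) (stdE n 1)
        - scBr n (Lc n α β γ) (LL (stdE n 1)) (stdE n (n - 1)) := by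
    have h := hI5 (stdE n (n - 1)) (stdE n 1)
    rw [Br_EmE1 hn, map_add, map_smul, hLe2, smul_zero, add_zero] at h
    exact h
  have hLn0 : LL (stdE n n) = 0 := by
    have h5 := hI5 (stdE n (n - 1)) (stdE n (n - 1))
    rw [Br_EmEm hn, map_smul, sub_self] at h5
    have h6 := hI5 (stdE n 1) (stdE n (n - 1))
    rw [Br_E1Em hn, map_smul] at h6
    have h7 : β • LL (stdE n n) = - LL (stdE n n) := by
      conv_rhs => rw [hLn]
      rw [neg_sub]
      exact h6
    rcases hβγ with hβ | hγ
    · -- from h5 if γ ≠ 0 else use h7; here β ≠ 0: cases on γ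
      by_cases hγ : γ = 0
      · -- then β = 1 (case B); (β+1) • Ln = 0
        have h8 : (β + 1) • LL (stdE n n) = 0 := by
          rw [add_smul, one_smul, h7, neg_add_cancel]
        have hβ1 : β + 1 ≠ 0 := by
          rcases htriple with ⟨h1, h2, h3⟩ | ⟨h1, h2, h3⟩ | ⟨h1, h2, h3⟩ | ⟨h1, h2, h3⟩ |
            ⟨h1, h2, h3⟩ <;> rw [h2] <;> norm_num
        exact (smul_eq_zero.mp h8).resolve_left hβ1
      · exact (smul_eq_zero.mp h5).resolve_left hγ
    · exact (smul_eq_zero.mp h5).resolve_left hγ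
  have hQP : scBr n (Lc n α β γ) (LL (stdE n (n - 1))) (stdE n 1)
      = scBr n (Lc n α β γ) (LL (stdE n 1)) (stdE n (n - 1)) := by
    have := hLn.symm.trans hLn0
    exact sub_eq_zero.mp this
  -- step 9 : coordinates of hQP
  have hC2 : LL (stdE n (n - 1)) ⟨0, by omega⟩
      + α * LL (stdE n (n - 1)) ⟨n - 2, by omega⟩ = 0 := by
    have h := congrFun hQP (⟨1, by omega⟩ : Fin n)
    rw [Br_wE1 hn, Br_wEm hn] at h
    simp only [Fin.val_mk] at h
    split_ifs at h <;> first | (exfalso; omega) | linear_combination h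
  have hCn : LL (stdE n (n - 1)) ⟨n - 2, by omega⟩ =
      β * LL (stdE n 1) ⟨0, by omega⟩ + γ * LL (stdE n 1) ⟨n - 2, by omega⟩ := by
    have h := congrFun hQP (⟨n - 1, by omega⟩ : Fin n)
    rw [Br_wE1 hn, Br_wEm hn] at h
    simp only [Fin.val_mk] at h
    split_ifs at h <;> first | (exfalso; omega) | linear_combination h
  -- step 10 : b_{n-1} = 0 and a₁ = 0, per case
  have hbm : D (stdE n (n - 1)) ⟨n - 2, by omega⟩ = 0 := by
    rcases htriple with ⟨h1, h2, h3⟩ | ⟨h1, h2, h3⟩ | ⟨h1, h2, h3⟩ | ⟨h1, h2, h3⟩ | ⟨h1, h2, h3⟩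
    · subst h1; subst h2; subst h3
      linear_combination hQmγ - hCn - hPmγ + ham
    · subst h1; subst h2; subst h3
      linear_combination hQmβ - hC2 + hQ0 - hb1
    · subst h1; subst h2; subst h3
      linear_combination hQmβ - hC2 + hQ0 - hb1
    · subst h1; subst h2; subst h3
      linear_combination hQmβ / 2 - hC2 + hQ0 - hb1
    · subst h1; subst h2
      have hQm : LL (stdE n (n - 1)) ⟨n - 2, by omega⟩ = 0 := by
        linear_combination hC2 - hQ0 + hb1
      have h' : γ * D (stdE n (n - 1)) ⟨n - 2, by omega⟩ = 0 := by
        linear_combination hQmγ - γ * hQm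
      exact (mul_eq_zero.mp h').resolve_left h3
  have ha0 : D (stdE n 1) ⟨0, by omega⟩ = 0 := by
    rcases htriple with ⟨h1, h2, h3⟩ | ⟨h1, h2, h3⟩ | ⟨h1, h2, h3⟩ | ⟨h1, h2, h3⟩ | ⟨h1, h2, h3⟩
    · subst h1; subst h2; subst h3
      linear_combination -hmu + hF5n - ham + hbm + hb1
    · subst h1; subst h2; subst h3
      linear_combination hP0 + hCn - hC2 + hQ0 - hb1
    · subst h1; subst h2; subst h3
      linear_combination hP0 + hCn - hC2 + hPmγ - ham + hQ0 - hb1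
    · subst h1; subst h2; subst h3
      linear_combination hP0 + (hCn - hC2 + hPmγ - 4 * ham + hQ0 - hb1) / 2
    · subst h1; subst h2
      have hDnn : γ * D (stdE n n) ⟨n - 1, by omega⟩ = 0 := by
        linear_combination hF5n + 2 * γ * hbm + hb1
      have h' : D (stdE n n) ⟨n - 1, by omega⟩ = 0 :=
        (mul_eq_zero.mp hDnn).resolve_left h3
      linear_combination -hmu + h' - hbm - γ * ham + ham
  -- step 11 : D e_n = 0
  have hch := hder (stdE n n) (stdE n 1)
  rw [Br_ENE1 hn, map_zero] at hch
  have hz2 : scBr n (Lc n α β γ) (stdE n n) (D (stdE n 1)) = 0 := by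
    funext j
    exact Br_ENw hn _ j
  rw [hz2, add_zero] at hch
  -- hch : 0 = scBr (D e_n) e₁
  have hDnm2 : D (stdE n n) ⟨n - 2, by omega⟩ = 0 := by
    have h := congrFun hch (⟨n - 1, by omega⟩ : Fin n)
    rw [Pi.zero_apply, Br_wE1 hn] at h
    simp only [Fin.val_mk] at h
    split_ifs at h <;> first | (exfalso; omega) | linear_combination -h
  have hDn0 : D (stdE n n) ⟨0, by omega⟩ = 0 := by
    have h := congrFun hch (⟨1, by omega⟩ : Fin n)
    rw [Pi.zero_apply, Br_wE1 hn] at h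
    simp only [Fin.val_mk] at h
    split_ifs at h <;> first | (exfalso; omega) | linear_combination -h - α * hDnm2
  have hDnmid : ∀ k : ℕ, 1 ≤ k → k ≤ n - 4 → ∀ hk : k < n, D (stdE n n) ⟨k, hk⟩ = 0 := by
    intro k hk1 hk2 hk
    have h := congrFun hch (⟨k + 1, by omega⟩ : Fin n)
    rw [Pi.zero_apply, Br_wE1 hn] at h
    simp only [Fin.val_mk] at h
    simp only [show k + 1 - 1 = k from by omega] at h
    split_ifs at h <;> first | (exfalso; omega) | linear_combination -h
  have hDnm3 : D (stdE n n) ⟨n - 3, by omega⟩ = 0 := by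
    rcases hβγ with hβ | hγ
    · exact (mul_eq_zero.mp hF4m).resolve_left hβ
    · exact (mul_eq_zero.mp hF5m).resolve_left hγ
  have hDnn : D (stdE n n) ⟨n - 1, by omega⟩ = 0 := by
    linear_combination hmu + hbm + ha0 + γ * ham - α * (ham + β * ham)
  have hDN : D (stdE n n) = 0 := by
    funext j
    simp only [Pi.zero_apply]
    have hcase : (j : ℕ) = 0 ∨ (1 ≤ (j : ℕ) ∧ (j : ℕ) ≤ n - 4) ∨ (j : ℕ) = n - 3
        ∨ (j : ℕ) = n - 2 ∨ (j : ℕ) = n - 1 := by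
      have := j.isLt; omega
    rcases hcase with h | ⟨h1, h2⟩ | h | h | h
    · rw [show j = (⟨0, by omega⟩ : Fin n) from Fin.ext (by simp only [Fin.val_mk]; omega)]
      exact hDn0
    · have := hDnmid (j : ℕ) h1 h2 j.isLt
      rwa [show (⟨(j : ℕ), j.isLt⟩ : Fin n) = j from Fin.ext rfl] at this
    · rw [show j = (⟨n - 3, by omega⟩ : Fin n) from Fin.ext (by simp only [Fin.val_mk]; omega)]
      exact hDnm3
    · rw [show j = (⟨n - 2, by omega⟩ : Fin n) from Fin.ext (by simp only [Fin.val_mk]; omega)]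
      exact hDnm2
    · rw [show j = (⟨n - 1, by omega⟩ : Fin n) from Fin.ext (by simp only [Fin.val_mk]; omega)]
      exact hDnn
  exact ⟨ha0, ham, hb1, hbm, hDN⟩

end ModelScalar

section MainGeneral

variable {R : Type} [AddCommGroup R] [Module ℂ R]

lemma bracketSpan_le (B : LeibnizAlgStr R) {A C T : Submodule ℂ R}
    (h : ∀ a ∈ A, ∀ c ∈ C, B.br a c ∈ T) : bracketSpan B A C ≤ T := by
  apply Submodule.span_le.mpr
  rintro z ⟨a, ha, c, hc, rfl⟩
  exact h a ha c hc

lemma mem_bracketSpan (B : LeibnizAlgStr R) {A C : Submodule ℂ R} {a c : R}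
    (ha : a ∈ A) (hc : c ∈ C) : B.br a c ∈ bracketSpan B A C :=
  Submodule.subset_span ⟨a, ha, c, hc, rfl⟩

lemma idealLCS_le_self (B : LeibnizAlgStr R) {I : Submodule ℂ R} (hI : IsIdeal B I) :
    ∀ k, idealLCS B I k ≤ I
  | 0 => le_rfl
  | (k + 1) => bracketSpan_le B (fun a _ c hc => (hI c hc a).2)

lemma idealLCS_bot (B : LeibnizAlgStr R) {I : Submodule ℂ R} {m : ℕ}
    (h : idealLCS B I m = ⊥) : ∀ s, idealLCS B I (m + s) = ⊥ := by
  intro s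
  induction s with
  | zero => exact h
  | succ s ih =>
    show bracketSpan B (idealLCS B I (m + s)) I = ⊥
    rw [ih, eq_bot_iff]
    apply bracketSpan_le
    intro a ha c _
    rw [Submodule.mem_bot] at ha
    rw [ha, map_zero, LinearMap.zero_apply]
    exact Submodule.zero_mem _

/-- right-multiplication is a derivation (rearranged Leibniz identity). -/
lemma br_deriv (B : LeibnizAlgStr R) (x u v : R) :
    B.br (B.br u v) x = B.br (B.br u x) v + B.br u (B.br v x) := by
  have h := B.leibniz u v x
  rw [h]
  abel

end MainGeneral

/-- wrapper: the model derivation is nilpotent. -/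
lemma model_D_nilpotent {n : ℕ} {α β γ : ℂ} (hn : 5 ≤ n)
    (htriple : (α = 0 ∧ β = 0 ∧ γ = 1) ∨ (α = 1 ∧ β = 1 ∧ γ = 0) ∨
      (α = 1 ∧ β = 1 ∧ γ = 1) ∨ (α = 1 ∧ β = 2 ∧ γ = 4) ∨ (α = 1 ∧ β = 0 ∧ γ ≠ 0))
    (D LL : (Fin n → ℂ) →ₗ[ℂ] (Fin n → ℂ))
    (hder : ∀ u v, D (scBr n (Lc n α β γ) u v) =
      scBr n (Lc n α β γ) (D u) v + scBr n (Lc n α β γ) u (D v))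
    (hI5 : ∀ u v, LL (scBr n (Lc n α β γ) u v) =
      scBr n (Lc n α β γ) (LL u) v - scBr n (Lc n α β γ) (LL v) u)
    (hI2 : ∀ u v, scBr n (Lc n α β γ) u (LL v) = - scBr n (Lc n α β γ) u (D v)) :
    ∀ w, (⇑D)^[n] w = 0 := by
  obtain ⟨ha0, ham, hb1, hbm, hDN⟩ := model_scalar_facts hn htriple D LL hder hI5 hI2
  exact model_D_nilpotent_aux hn D hder ha0 ham hb1 hbm hDN

theorem no_codim_one_solvable_extension_L (n : ℕ) (hn : 5 ≤ n) (α β γ : ℂ)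
    (htriple : (α = 0 ∧ β = 0 ∧ γ = 1) ∨ (α = 1 ∧ β = 1 ∧ γ = 0) ∨
      (α = 1 ∧ β = 1 ∧ γ = 1) ∨ (α = 1 ∧ β = 2 ∧ γ = 4) ∨ (α = 1 ∧ β = 0 ∧ γ ≠ 0))
    (R : Type) [AddCommGroup R] [Module ℂ R] [FiniteDimensional ℂ R]
    (B : LeibnizAlgStr R) (hsolv : IsSolvableAlg B)
    (hdim : Module.finrank ℂ R = n + 1)
    (hnil : NilradIsoModel B n (Lc n α β γ)) : False := by
  obtain ⟨I, ⟨⟨hIid, m₀, hInil⟩, hImax⟩, g, hginj, hgrange, hgbr⟩ := hnil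
  -- dimension of I
  have hrankI : Module.finrank ℂ I = n := by
    rw [← hgrange, LinearMap.finrank_range_of_inj hginj, Module.finrank_fin_fun]
  -- a vector outside I
  have hInet : I ≠ ⊤ := by
    intro h
    rw [h, finrank_top, hdim] at hrankI
    omega
  obtain ⟨x, hx⟩ : ∃ x : R, x ∉ I := by
    by_contra h
    push_neg at h
    exact hInet (eq_top_iff.mpr fun y _ => h y)
  -- a linear functional with kernel I
  obtain ⟨π, hπx, hπker⟩ : ∃ π : R →ₗ[ℂ] ℂ, π x = 1 ∧ LinearMap.ker π = I := by
    have hmkx : I.mkQ x ≠ 0 := by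
      intro h
      exact hx ((Submodule.Quotient.mk_eq_zero I).mp h)
    obtain ⟨φ, hφ⟩ : ∃ φ : Module.Dual ℂ (R ⧸ I), φ (I.mkQ x) ≠ 0 := by
      by_contra h
      push_neg at h
      exact hmkx ((Module.forall_dual_apply_eq_zero_iff ℂ _).mp h)
    set π0 : R →ₗ[ℂ] ℂ := φ.comp I.mkQ with hπ0
    set π : R →ₗ[ℂ] ℂ := (π0 x)⁻¹ • π0 with hπdef
    have hπx : π x = 1 := by
      rw [hπdef]
      simp only [LinearMap.smul_apply, smul_eq_mul]
      exact inv_mul_cancel₀ hφ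
    have hIker : I ≤ LinearMap.ker π := by
      intro y hy
      rw [LinearMap.mem_ker, hπdef]
      simp only [LinearMap.smul_apply, smul_eq_mul, hπ0, LinearMap.comp_apply]
      have h0 : I.mkQ y = 0 := by
        rwa [← LinearMap.mem_ker, Submodule.ker_mkQ]
      rw [h0, map_zero, mul_zero]
    have hπne : π ≠ 0 := by
      intro h
      rw [h] at hπx
      simp at hπx
    refine ⟨π, hπx, ?_⟩
    symm
    apply Submodule.eq_of_le_of_finrank_eq hIker
    rw [hrankI]
    have h1 := LinearMap.finrank_range_add_finrank_ker π
    have h2 : Module.finrank ℂ (LinearMap.range π) = 1 := by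
      have : LinearMap.range π = ⊤ := by
        rw [LinearMap.range_eq_top]
        intro c
        exact ⟨c • x, by rw [map_smul, hπx, smul_eq_mul, mul_one]⟩
      rw [this, finrank_top, Module.finrank_self]
    rw [h2, hdim] at h1
    omega
  have hmemI : ∀ y : R, π y = 0 → y ∈ I := fun y hy => hπker ▸ LinearMap.mem_ker.mpr hy
  have hIpi : ∀ y ∈ I, π y = 0 := fun y hy => LinearMap.mem_ker.mp (hπker ▸ hy)
  -- key decomposition of brackets
  have hkey : ∀ a b : R, B.br a b - (π a * π b) • B.br x x ∈ I := by
    intro a b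
    have ha' : a - π a • x ∈ I := hmemI _ (by rw [map_sub, map_smul, hπx, smul_eq_mul,
      mul_one, sub_self])
    have hb' : b - π b • x ∈ I := hmemI _ (by rw [map_sub, map_smul, hπx, smul_eq_mul,
      mul_one, sub_self])
    have hdecomp : B.br a b - (π a * π b) • B.br x x
        = B.br (a - π a • x) b + π a • B.br x (b - π b • x) := by
      simp only [map_sub, map_smul, LinearMap.sub_apply, LinearMap.smul_apply, smul_sub,
        smul_smul, mul_comm]
      abel
    rw [hdecomp]
    exact Submodule.add_mem _ ((hIid _ ha' b).1) (Submodule.smul_mem _ _ ((hIid _ hb' x).2))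
  -- solvability forces [x,x] ∈ I
  have hbrxx : B.br x x ∈ I := by
    apply hmemI
    by_contra hc
    set y : ℕ → R := fun k => Nat.rec x (fun _ v => B.br v v) k with hy
    have hy0 : y 0 = x := rfl
    have hys : ∀ k, y (k + 1) = B.br (y k) (y k) := fun k => rfl
    have hmem : ∀ k, y k ∈ derivedSer B k := by
      intro k
      induction k with
      | zero => exact Submodule.mem_top
      | succ k ih => exact mem_bracketSpan B ih ih
    have hne : ∀ k, π (y k) ≠ 0 := by
      intro k
      induction k with
      | zero => rw [hy0, hπx]; norm_num
      | succ k ih =>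
        rw [hys]
        have h := hIpi _ (hkey (y k) (y k))
        rw [map_sub, map_smul, smul_eq_mul, sub_eq_zero] at h
        rw [h]
        exact mul_ne_zero (mul_ne_zero ih ih) hc
      
    obtain ⟨m, hm⟩ := hsolv
    have := hmem m
    rw [hm, Submodule.mem_bot] at this
    exact hne m (by rw [this, map_zero])
  have hbrI : ∀ a b : R, B.br a b ∈ I := by
    intro a b
    have h1 := hkey a b
    have := Submodule.add_mem I h1 (Submodule.smul_mem I (π a * π b) hbrxx)
    rwa [sub_add_cancel] at this
  -- the operators d' and L'
  set d' : R →ₗ[ℂ] R := B.br.flip x with hd'def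
  set L' : R →ₗ[ℂ] R := B.br x with hL'def
  have hd'app : ∀ y : R, d' y = B.br y x := fun y => rfl
  have hL'app : ∀ y : R, L' y = B.br x y := fun y => rfl
  -- construct D and LL on the model
  set eqv : (Fin n → ℂ) ≃ₗ[ℂ] LinearMap.range g := LinearEquiv.ofInjective g hginj with heqv
  have heqv_apply : ∀ u, ((eqv u : LinearMap.range g) : R) = g u := by
    intro u
    rw [heqv]
    rfl
  have hg_symm : ∀ z : LinearMap.range g, g (eqv.symm z) = (z : R) := by
    intro z
    rw [← heqv_apply, LinearEquiv.apply_symm_apply]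
  have hd'mem0 : ∀ y : R, y ∈ LinearMap.range g → d' y ∈ LinearMap.range g := by
    intro y hy
    rw [hgrange] at hy ⊢
    exact (hIid y hy x).1
  have hL'mem0 : ∀ y : R, y ∈ LinearMap.range g → L' y ∈ LinearMap.range g := by
    intro y hy
    rw [hgrange] at hy ⊢
    exact (hIid y hy x).2
  have hd'mem : ∀ z : LinearMap.range g, d' ((LinearMap.range g).subtype z) ∈ LinearMap.range g :=
    fun z => hd'mem0 _ z.2
  have hL'mem : ∀ z : LinearMap.range g, L' ((LinearMap.range g).subtype z) ∈ LinearMap.range g :=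
    fun z => hL'mem0 _ z.2
  set D : (Fin n → ℂ) →ₗ[ℂ] (Fin n → ℂ) :=
    eqv.symm.toLinearMap ∘ₗ (LinearMap.codRestrict (LinearMap.range g)
      (d' ∘ₗ (LinearMap.range g).subtype) hd'mem) ∘ₗ eqv.toLinearMap with hD
  set LL : (Fin n → ℂ) →ₗ[ℂ] (Fin n → ℂ) :=
    eqv.symm.toLinearMap ∘ₗ (LinearMap.codRestrict (LinearMap.range g)
      (L' ∘ₗ (LinearMap.range g).subtype) hL'mem) ∘ₗ eqv.toLinearMap with hLL
  have hgD : ∀ w, g (D w) = B.br (g w) x := by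
    intro w
    rw [hD]
    simp only [LinearMap.comp_apply, LinearEquiv.coe_coe]
    rw [hg_symm]
    rw [LinearMap.codRestrict_apply]
    simp only [LinearMap.comp_apply, Submodule.coe_subtype]
    rw [heqv_apply]
    rfl
  have hgLL : ∀ w, g (LL w) = B.br x (g w) := by
    intro w
    rw [hLL]
    simp only [LinearMap.comp_apply, LinearEquiv.coe_coe]
    rw [hg_symm]
    rw [LinearMap.codRestrict_apply]
    simp only [LinearMap.comp_apply, Submodule.coe_subtype]
    rw [heqv_apply]
  -- transport the algebra identities
  have hder : ∀ u v, D (scBr n (Lc n α β γ) u v) =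
      scBr n (Lc n α β γ) (D u) v + scBr n (Lc n α β γ) u (D v) := by
    intro u v
    apply hginj
    rw [map_add, hgD, hgbr, hgbr, hgbr, hgD, hgD]
    exact br_deriv B x (g u) (g v)
  have hI5 : ∀ u v, LL (scBr n (Lc n α β γ) u v) =
      scBr n (Lc n α β γ) (LL u) v - scBr n (Lc n α β γ) (LL v) u := by
    intro u v
    apply hginj
    rw [map_sub, hgLL, hgbr, hgbr, hgbr, hgLL, hgLL]
    exact B.leibniz x (g u) (g v)
  have hI2 : ∀ u v, scBr n (Lc n α β γ) u (LL v) = - scBr n (Lc n α β γ) u (D v) := by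
    intro u v
    apply hginj
    rw [map_neg, hgbr, hgbr, hgLL, hgD]
    have h := B.leibniz (g u) x (g v)
    -- h : br gu (br x gv) = br (br gu x) gv - br (br gu gv) x
    rw [h]
    have h2 := br_deriv B x (g u) (g v)
    -- h2 : br (br gu gv) x = br (br gu x) gv + br gu (br gv x)
    rw [h2]
    abel
  -- the model derivation is nilpotent
  have hDnil : ∀ w, (⇑D)^[n] w = 0 := model_D_nilpotent hn htriple D LL hder hI5 hI2
  -- transport nilpotency to d' on I
  have hd'g : ∀ w, d' (g w) = g (D w) := fun w => (hgD w).symm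
  have hd'iter : ∀ (j : ℕ) (w : Fin n → ℂ), (⇑d')^[j] (g w) = g ((⇑D)^[j] w) := by
    intro j
    induction j with
    | zero => intro w; rfl
    | succ j ih =>
      intro w
      rw [Function.iterate_succ_apply', Function.iterate_succ_apply', ih, hd'g]
  have hd'nilI : ∀ y ∈ I, (d' ^ n : R →ₗ[ℂ] R) y = 0 := by
    intro y hy
    rw [← hgrange] at hy
    obtain ⟨w, rfl⟩ := hy
    rw [Module.End.pow_apply, hd'iter, hDnil, map_zero]
  have hd'I : ∀ y ∈ I, d' y ∈ I := fun y hy => (hIid y hy x).1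
  have hpowI : ∀ (j : ℕ), ∀ y ∈ I, (d' ^ j : R →ₗ[ℂ] R) y ∈ I := by
    intro j
    induction j with
    | zero => intro y hy; rwa [pow_zero, Module.End.one_apply]
    | succ j ih =>
      intro y hy
      rw [pow_succ, Module.End.mul_apply]
      exact ih _ (hd'I y hy)
  -- the filtration
  set V : ℕ → ℕ → Submodule ℂ R :=
    fun i j => Submodule.map (d' ^ j : R →ₗ[ℂ] R) (idealLCS B I i) with hV
  have hVle : ∀ i j, V i j ≤ I := by
    intro i j
    rintro y ⟨v, hv, rfl⟩
    exact hpowI j v (idealLCS_le_self B hIid i hv)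
  have hVbot1 : ∀ i j, m₀ ≤ i → V i j = ⊥ := by
    intro i j hi
    have : idealLCS B I i = ⊥ := by
      have := idealLCS_bot B hInil (i - m₀)
      rwa [show m₀ + (i - m₀) = i from by omega] at this
    rw [hV]
    simp only [this, Submodule.map_bot]
  have hVbot2 : ∀ i j, n ≤ j → V i j = ⊥ := by
    intro i j hj
    rw [eq_bot_iff]
    rintro y ⟨v, hv, rfl⟩
    rw [Submodule.mem_bot, show j = n + (j - n) from by omega, pow_add,
      Module.End.mul_apply]
    exact hd'nilI _ (hpowI (j - n) v (idealLCS_le_self B hIid i hv))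
  set G : ℕ → Submodule ℂ R :=
    fun t => ⨆ (p : ℕ × ℕ) (_ : t ≤ p.1 * n + p.2), V p.1 p.2 with hG
  have hVG : ∀ t i j, t ≤ i * n + j → V i j ≤ G t := by
    intro t i j hle
    rw [hG]
    exact le_iSup_of_le (i, j) (le_iSup_of_le hle le_rfl)
  -- claim A : bracketing with elements of I
  have claimA : ∀ (j i : ℕ) (v : R), v ∈ idealLCS B I i → ∀ w ∈ I,
      B.br ((d' ^ j : R →ₗ[ℂ] R) v) w ∈
        ⨆ (b : ℕ) (_ : b ≤ j), Submodule.map (d' ^ b : R →ₗ[ℂ] R) (idealLCS B I (i + 1)) := by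
    intro j
    induction j with
    | zero =>
      intro i v hv w hw
      apply Submodule.mem_iSup_of_mem 0
      apply Submodule.mem_iSup_of_mem (le_refl 0)
      exact ⟨B.br v w, mem_bracketSpan B hv hw, by
        rw [pow_zero]
        simp only [Module.End.one_apply]⟩
    | succ j ih =>
      intro i v hv w hw
      have hrw : B.br ((d' ^ (j + 1) : R →ₗ[ℂ] R) v) w
          = d' (B.br ((d' ^ j : R →ₗ[ℂ] R) v) w) - B.br ((d' ^ j : R →ₗ[ℂ] R) v) (d' w) := by
        have h := br_deriv B x ((d' ^ j : R →ₗ[ℂ] R) v) w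
        -- h : br (br y w) x = br (br y x) w + br y (br w x)
        rw [pow_succ', Module.End.mul_apply]
        have : d' ((d' ^ j : R →ₗ[ℂ] R) v) = B.br ((d' ^ j : R →ₗ[ℂ] R) v) x := rfl
        rw [this]
        rw [show d' (B.br ((d' ^ j : R →ₗ[ℂ] R) v) w) = B.br (B.br ((d' ^ j : R →ₗ[ℂ] R) v) w) x
          from rfl, h, show d' w = B.br w x from rfl]
        abel
      rw [hrw]
      apply Submodule.sub_mem
      · -- d' of the inductive sup
        have hsub : (⨆ (b : ℕ) (_ : b ≤ j),
            Submodule.map (d' ^ b : R →ₗ[ℂ] R) (idealLCS B I (i + 1))) ≤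
            Submodule.comap d' (⨆ (b : ℕ) (_ : b ≤ j + 1),
              Submodule.map (d' ^ b : R →ₗ[ℂ] R) (idealLCS B I (i + 1))) := by
          apply iSup_le
          intro b
          apply iSup_le
          intro hb
          rintro y ⟨u, hu, rfl⟩
          rw [Submodule.mem_comap]
          apply Submodule.mem_iSup_of_mem (b + 1)
          apply Submodule.mem_iSup_of_mem (by omega : b + 1 ≤ j + 1)
          exact ⟨u, hu, by rw [pow_succ', Module.End.mul_apply]⟩
        have := hsub (ih i v hv w hw)
        rwa [Submodule.mem_comap] at this
      · have hmono : (⨆ (b : ℕ) (_ : b ≤ j),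
            Submodule.map (d' ^ b : R →ₗ[ℂ] R) (idealLCS B I (i + 1))) ≤
            ⨆ (b : ℕ) (_ : b ≤ j + 1),
              Submodule.map (d' ^ b : R →ₗ[ℂ] R) (idealLCS B I (i + 1)) :=
          iSup_le fun b => iSup_le fun hb =>
            le_iSup_of_le b (le_iSup_of_le (Nat.le_succ_of_le hb) le_rfl)
        exact hmono (ih i v hv (d' w) (hd'I w hw))
  -- transition : bracketing G t with anything lands in G (t+1)
  have htrans : ∀ t, ∀ u ∈ G t, ∀ r : R, B.br u r ∈ G (t + 1) := by
    intro t
    suffices h : G t ≤ {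
        carrier := {u : R | ∀ r : R, B.br u r ∈ G (t + 1)}
        add_mem' := by
          intro a b ha hb r
          rw [map_add, LinearMap.add_apply]
          exact Submodule.add_mem _ (ha r) (hb r)
        zero_mem' := by
          intro r
          rw [map_zero, LinearMap.zero_apply]
          exact Submodule.zero_mem _
        smul_mem' := by
          intro c a ha r
          rw [map_smul, LinearMap.smul_apply]
          exact Submodule.smul_mem _ _ (ha r) } by
      intro u hu r
      exact h hu r
    rw [hG]
    apply iSup_le
    rintro ⟨i, j⟩
    apply iSup_le
    intro hle
    by_cases hj : n ≤ j
    · rw [hVbot2 i j hj]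
      exact bot_le
    have hle' : t ≤ i * n + j := hle
    rintro u hu r
    obtain ⟨v, hv, rfl⟩ := hu
    show B.br ((d' ^ j : R →ₗ[ℂ] R) v) r ∈ G (t + 1)
    have hdecr : B.br ((d' ^ j : R →ₗ[ℂ] R) v) r
        = B.br ((d' ^ j : R →ₗ[ℂ] R) v) (r - π r • x)
          + π r • (d' ^ (j + 1) : R →ₗ[ℂ] R) v := by
      rw [pow_succ', Module.End.mul_apply,
        show d' ((d' ^ j : R →ₗ[ℂ] R) v) = B.br ((d' ^ j : R →ₗ[ℂ] R) v) x from rfl,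
        map_sub, map_smul]
      abel
    have h1 : B.br ((d' ^ j : R →ₗ[ℂ] R) v) (r - π r • x) ∈ G (t + 1) := by
      have hw : r - π r • x ∈ I := hmemI _ (by
        rw [map_sub, map_smul, hπx, smul_eq_mul, mul_one, sub_self])
      have hSG : (⨆ (b : ℕ) (_ : b ≤ j),
          Submodule.map (d' ^ b : R →ₗ[ℂ] R) (idealLCS B I (i + 1))) ≤ G (t + 1) := by
        apply iSup_le
        intro b
        apply iSup_le
        intro hb
        refine hVG (t + 1) (i + 1) b ?_
        have hexp : (i + 1) * n = i * n + n := by ring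
        omega
      exact hSG (claimA j i v hv _ hw)
    have h2 : π r • (d' ^ (j + 1) : R →ₗ[ℂ] R) v ∈ G (t + 1) :=
      Submodule.smul_mem _ _ (hVG (t + 1) i (j + 1) (by omega) ⟨v, hv, rfl⟩)
    rw [hdecr]
    exact Submodule.add_mem _ h1 h2
  -- the lower central series of ⊤ descends through G
  have hIG0 : I ≤ G 0 := by
    have hV00 : V 0 0 = I := by
      rw [hV]
      show Submodule.map ((d' : R →ₗ[ℂ] R) ^ 0) (idealLCS B I 0) = I
      rw [pow_zero, Module.End.one_eq_id]
      exact Submodule.map_id _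
    rw [← hV00]
    exact hVG 0 0 0 (by omega)
  have hG0 : idealLCS B ⊤ 1 ≤ G 0 := by
    show bracketSpan B ⊤ ⊤ ≤ G 0
    apply bracketSpan_le
    intro a _ c _
    exact hIG0 (hbrI a c)
  have hlcs : ∀ t, idealLCS B ⊤ (1 + t) ≤ G t := by
    intro t
    induction t with
    | zero => exact hG0
    | succ t ih =>
      show bracketSpan B (idealLCS B ⊤ (1 + t)) ⊤ ≤ G (t + 1)
      apply bracketSpan_le
      intro a ha c _
      exact htrans t a (ih ha) c
  have hGbot : G ((m₀ + 1) * n) = ⊥ := by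
    rw [eq_bot_iff, hG]
    apply iSup_le
    rintro ⟨i, j⟩
    apply iSup_le
    intro hle
    have hle' : (m₀ + 1) * n ≤ i * n + j := hle
    by_cases hi : m₀ ≤ i
    · rw [hVbot1 i j hi]
    · have hj : n ≤ j := by
        have h1 : (m₀ + 1) * n = m₀ * n + n := by ring
        have h2 : (i + 1) * n ≤ m₀ * n := Nat.mul_le_mul_right n (by omega)
        have h3 : (i + 1) * n = i * n + n := by ring
        omega
      rw [hVbot2 i j hj]
  have htop : idealLCS B ⊤ (1 + (m₀ + 1) * n) = ⊥ :=
    le_bot_iff.mp (hGbot ▸ hlcs ((m₀ + 1) * n))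
  have htopnil : IsNilpotentIdeal B ⊤ :=
    ⟨fun a _ y => ⟨Submodule.mem_top, Submodule.mem_top⟩, ⟨1 + (m₀ + 1) * n, htop⟩⟩
  exact hx (hImax ⊤ htopnil Submodule.mem_top)
end
end
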